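/- arXiv:1502.01640 — 7 statements merged into one kernel-verified Lean document; each statement's English description precedes it below -/
import Mathlib

section
/- A simplicial set X is isomorphic to the nerve of a small category if and only if for every n ≥ 2 the Segal map (u_1^*, …, u_n^*) : X_n → X_1 ×_{X_0} X_1 ×_{X_0} ⋯ ×_{X_0} X_1 is a bijection, where u_i : [1] → [n] is the monotone map with u_i(0) = i−1 and u_i(1) = i. -/
open CategoryTheory Simplicial

namespace Stmt0

/-- The Segal (spine) map: an `n`-simplex is sent to its tuple of spine edges,
the `i`-th edge being the image under the map `u_{i+1} : [1] → [n]` sending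
`0 ↦ i`, `1 ↦ i+1`. -/
def segalMap (X : SSet.{0}) (n : ℕ) (σ : X _⦋n⦌) : Fin n → X _⦋1⦌ :=
  fun i => X.map (SimplexCategory.mkOfSucc i).op σ

/-- A tuple of `1`-simplices is composable (an element of the iterated fiber
product `X_1 ×_{X_0} ⋯ ×_{X_0} X_1`) if the target vertex of each edge is the
source vertex of the next one. -/
def Composable (X : SSet.{0}) (n : ℕ) (f : Fin n → X _⦋1⦌) : Prop :=
  ∀ i j : Fin n, (i : ℕ) + 1 = (j : ℕ) →
    X.map (SimplexCategory.const ⦋0⦌ ⦋1⦌ 1).op (f i) =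
      X.map (SimplexCategory.const ⦋0⦌ ⦋1⦌ 0).op (f j)

open SSet SimplexCategory

set_option linter.unusedSectionVars false

section PreSegal

variable {X : SSet.{0}}

lemma delta_one_eq : (δ 1 : (⦋0⦌ : SimplexCategory) ⟶ ⦋1⦌) = const ⦋0⦌ ⦋1⦌ 0 :=
  Hom.ext_zero_left _ _
lemma delta_zero_eq : (δ 0 : (⦋0⦌ : SimplexCategory) ⟶ ⦋1⦌) = const ⦋0⦌ ⦋1⦌ 1 :=
  Hom.ext_zero_left _ _

variable {X : SSet.{0}}

lemma dzero_eq_const (x : X _⦋1⦌) : X.δ 0 x = X.map (const ⦋0⦌ ⦋1⦌ 1).op x := by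
  rw [SimplicialObject.δ, delta_zero_eq]
lemma done_eq_const (x : X _⦋1⦌) : X.δ 1 x = X.map (const ⦋0⦌ ⦋1⦌ 0).op x := by
  rw [SimplicialObject.δ, delta_one_eq]

lemma path_composable {n : ℕ} (p : Path X n) : Composable X n p.arrow := by
  intro i j hij
  rw [← dzero_eq_const, ← done_eq_const, p.arrow_tgt, p.arrow_src]
  congr 1
  exact Fin.ext (by simpa using hij)

/-- build a path from a composable tuple of edges -/
def mkPath' {n : ℕ} (f : Fin (n + 1) → X _⦋1⦌)
    (hc : ∀ i : Fin n, X.δ 0 (f i.castSucc) = X.δ 1 (f i.succ)) : Path X (n + 1) where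
  vertex i := Fin.lastCases (X.δ 0 (f (Fin.last n))) (fun j => X.δ 1 (f j)) i
  arrow := f
  arrow_src i := by
    change X.δ 1 (f i) = Fin.lastCases (motive := fun _ => X _⦋0⦌) (X.δ 0 (f (Fin.last n))) (fun j => X.δ 1 (f j)) i.castSucc
    rw [Fin.lastCases_castSucc]
  arrow_tgt i := by
    change X.δ 0 (f i) = Fin.lastCases (motive := fun _ => X _⦋0⦌) (X.δ 0 (f (Fin.last n))) (fun j => X.δ 1 (f j)) i.succ
    induction i using Fin.lastCases with
    | last => rw [Fin.succ_last]; exact (Fin.lastCases_last (motive := fun _ => X _⦋0⦌)).symm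
    | cast j => rw [Fin.succ_castSucc, Fin.lastCases_castSucc]; exact hc j

lemma segalMap_eq_spine_arrow (n : ℕ) (σ : X _⦋n⦌) :
    segalMap X n σ = (X.spine n σ).arrow := rfl

lemma mkOfSucc_zero_one : mkOfSucc (0 : Fin 1) = 𝟙 (⦋1⦌ : SimplexCategory) :=
  Hom.ext_one_left _ _


end PreSegal

/-- a typeclass wrapper around the `StrictSegal` structure -/
class SSC (X : SSet.{0}) : Type where
  sx : StrictSegal X

section SSCApi

variable {X : SSet.{0}} [SSC X] {n : ℕ}

noncomputable def spineToSimplex (p : Path X n) : X _⦋n⦌ := (SSC.sx (X := X)).spineToSimplex p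

lemma spine_spineToSimplex (p : Path X n) : X.spine n (spineToSimplex p) = p :=
  (SSC.sx (X := X)).spine_spineToSimplex_apply p

lemma spineToSimplex_spine (Δ : X _⦋n⦌) : spineToSimplex (X.spine n Δ) = Δ :=
  (SSC.sx (X := X)).spineToSimplex_spine_apply Δ

lemma spineToSimplex_vertex (i : Fin (n + 1)) (f : Path X n) :
    X.map (SimplexCategory.const ⦋0⦌ ⦋n⦌ i).op (spineToSimplex f) = f.vertex i :=
  (SSC.sx (X := X)).spineToSimplex_vertex i f

lemma spineToSimplex_arrow (i : Fin n) (f : Path X n) :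
    X.map (mkOfSucc i).op (spineToSimplex f) = f.arrow i :=
  (SSC.sx (X := X)).spineToSimplex_arrow i f

noncomputable def spineToDiagonal (f : Path X n) : X _⦋1⦌ :=
  SimplicialObject.diagonal X (spineToSimplex f)

lemma spineInjective : Function.Injective (X.spine n) :=
  (SSC.sx (X := X)).spineInjective

noncomputable instance (C : Type) [SmallCategory C] : SSC (nerve C) := ⟨Nerve.strictSegal C⟩

end SSCApi

noncomputable def mkSS (X : SSet.{0})
    (H : ∀ n : ℕ, 2 ≤ n →
      Function.Injective (segalMap X n) ∧
      ∀ f : Fin n → X _⦋1⦌, Composable X n f → ∃ σ : X _⦋n⦌, segalMap X n σ = f) :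
    StrictSegal X where
  spineToSimplex {n} p :=
    match n, p with
    | 0, p => p.vertex 0
    | 1, p => p.arrow 0
    | (m + 2), p => ((H (m + 2) (by omega)).2 p.arrow (path_composable p)).choose
  spine_spineToSimplex n := funext fun p => by
    match n, p with
    | 0, p =>
      apply Path.ext₀
      simp
    | 1, p =>
      apply Path.ext'
      intro i
      fin_cases i
      simp [SSet.spine_arrow, mkOfSucc_zero_one]
    | (m + 2), p =>
      apply Path.ext'
      intro i
      have := ((H (m + 2) (by omega)).2 p.arrow (path_composable p)).choose_spec
      exact congrFun this i
  spineToSimplex_spine n := funext fun Δ => by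
    match n with
    | 0 => simp [SSet.spine_vertex]
    | 1 => simp [SSet.spine_arrow, mkOfSucc_zero_one]
    | (m + 2) =>
      apply (H (m + 2) (by omega)).1
      rw [segalMap_eq_spine_arrow]
      exact ((H (m + 2) (by omega)).2 _ (path_composable _)).choose_spec


section Segal

variable {X : SSet.{0}} [SSC X]

def pair (f g : X _⦋1⦌) : Fin 2 → X _⦋1⦌ := ![f, g]

def path₂ (f g : X _⦋1⦌) (h : X.δ 0 f = X.δ 1 g) : Path X 2 :=
  mkPath' (pair f g) (by intro i; fin_cases i; exact h)

@[simp] lemma path₂_vertex_zero (f g : X _⦋1⦌) (h) : (path₂ f g h).vertex 0 = X.δ 1 f :=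
  Fin.lastCases_castSucc (motive := fun _ => X _⦋0⦌) 0

@[simp] lemma path₂_vertex_two (f g : X _⦋1⦌) (h) : (path₂ f g h).vertex 2 = X.δ 0 g :=
  Fin.lastCases_last (motive := fun _ => X _⦋0⦌)

@[simp] lemma path₂_arrow_zero (f g : X _⦋1⦌) (h) : (path₂ f g h).arrow 0 = f := rfl
@[simp] lemma path₂_arrow_one (f g : X _⦋1⦌) (h) : (path₂ f g h).arrow 1 = g := rfl

noncomputable def compE (f g : X _⦋1⦌) (h : X.δ 0 f = X.δ 1 g) : X _⦋1⦌ :=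
  spineToDiagonal (path₂ f g h)

lemma compE_congr {f g f' g' : X _⦋1⦌} (hf : f = f') (hg : g = g') (h h') :
    compE f g h = compE f' g' h' := by subst hf; subst hg; rfl

lemma delta_one_diag (n : ℕ) : (δ 1 : (⦋0⦌:SimplexCategory) ⟶ ⦋1⦌) ≫ diag n = const ⦋0⦌ ⦋n⦌ 0 :=
  Hom.ext_zero_left _ _

lemma delta_zero_diag (n : ℕ) :
    (δ 0 : (⦋0⦌:SimplexCategory) ⟶ ⦋1⦌) ≫ diag n = const ⦋0⦌ ⦋n⦌ (Fin.last n) :=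
  Hom.ext_zero_left _ _ (by
    show (Fin.last n) = Fin.last n
    simp [Fin.ext_iff, Nat.mod_eq_of_lt])

lemma δ_one_spineToDiagonal {n : ℕ} (p : Path X n) :
    X.δ 1 (spineToDiagonal p) = p.vertex 0 := by
  rw [spineToDiagonal, SimplicialObject.diagonal, SimplicialObject.δ,
    ← FunctorToTypes.map_comp_apply, ← op_comp, delta_one_diag, spineToSimplex_vertex]

lemma δ_zero_spineToDiagonal {n : ℕ} (p : Path X n) :
    X.δ 0 (spineToDiagonal p) = p.vertex (Fin.last n) := by
  rw [spineToDiagonal, SimplicialObject.diagonal, SimplicialObject.δ,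
    ← FunctorToTypes.map_comp_apply, ← op_comp, delta_zero_diag, spineToSimplex_vertex]

@[simp] lemma δ_one_compE (f g : X _⦋1⦌) (h) : X.δ 1 (compE f g h) = X.δ 1 f := by
  rw [compE, δ_one_spineToDiagonal, path₂_vertex_zero]

@[simp] lemma δ_zero_compE (f g : X _⦋1⦌) (h) : X.δ 0 (compE f g h) = X.δ 0 g := by
  rw [compE, δ_zero_spineToDiagonal]
  exact path₂_vertex_two f g h

-- endpoints of long edges
lemma delta_one_mkOfLe {n : ℕ} (a b : Fin (n+1)) (hab : a ≤ b) :
    (δ 1 : (⦋0⦌:SimplexCategory) ⟶ ⦋1⦌) ≫ mkOfLe a b hab = const ⦋0⦌ ⦋n⦌ a :=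
  Hom.ext_zero_left _ _

lemma delta_zero_mkOfLe {n : ℕ} (a b : Fin (n+1)) (hab : a ≤ b) :
    (δ 0 : (⦋0⦌:SimplexCategory) ⟶ ⦋1⦌) ≫ mkOfLe a b hab = const ⦋0⦌ ⦋n⦌ b :=
  Hom.ext_zero_left _ _

lemma δ_one_map_mkOfLe {n : ℕ} (Δ : X _⦋n⦌) (a b : Fin (n+1)) (hab : a ≤ b) :
    X.δ 1 (X.map (mkOfLe a b hab).op Δ) = X.map (const ⦋0⦌ ⦋n⦌ a).op Δ := by
  rw [SimplicialObject.δ, ← FunctorToTypes.map_comp_apply, ← op_comp, delta_one_mkOfLe]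

lemma δ_zero_map_mkOfLe {n : ℕ} (Δ : X _⦋n⦌) (a b : Fin (n+1)) (hab : a ≤ b) :
    X.δ 0 (X.map (mkOfLe a b hab).op Δ) = X.map (const ⦋0⦌ ⦋n⦌ b).op Δ := by
  rw [SimplicialObject.δ, ← FunctorToTypes.map_comp_apply, ← op_comp, delta_zero_mkOfLe]

/-- The workhorse: a long edge of a simplex is the composite of two shorter long edges. -/
lemma edge_comp {n : ℕ} (Δ : X _⦋n⦌) (a b c : Fin (n+1)) (hab : a ≤ b) (hbc : b ≤ c) :
    X.map (mkOfLe a c (hab.trans hbc)).op Δ =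
      compE (X.map (mkOfLe a b hab).op Δ) (X.map (mkOfLe b c hbc).op Δ)
        (by rw [δ_zero_map_mkOfLe, δ_one_map_mkOfLe]) := by
  set ρ := mkOfLeComp a b c hab hbc with hρ
  have key : X.spine 2 (X.map ρ.op Δ) =
      path₂ (X.map (mkOfLe a b hab).op Δ) (X.map (mkOfLe b c hbc).op Δ)
        (by rw [δ_zero_map_mkOfLe, δ_one_map_mkOfLe]) := by
    apply Path.ext'
    intro i
    fin_cases i
    · show X.map (mkOfSucc (0 : Fin 2)).op (X.map ρ.op Δ) = _
      rw [← FunctorToTypes.map_comp_apply, ← op_comp]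
      have : mkOfSucc (0 : Fin 2) ≫ ρ = mkOfLe a b hab := Hom.ext_one_left _ _
      rw [this]
      rfl
    · show X.map (mkOfSucc (1 : Fin 2)).op (X.map ρ.op Δ) = _
      rw [← FunctorToTypes.map_comp_apply, ← op_comp]
      have : mkOfSucc (1 : Fin 2) ≫ ρ = mkOfLe b c hbc := Hom.ext_one_left _ _
      rw [this]
      rfl
  rw [compE, ← key, spineToDiagonal, spineToSimplex_spine, SimplicialObject.diagonal,
    ← FunctorToTypes.map_comp_apply, ← op_comp]
  have : diag 2 ≫ ρ = mkOfLe a c (hab.trans hbc) := Hom.ext_one_left _ _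
  rw [this]

lemma compE_id_left (f : X _⦋1⦌) (h : X.δ 0 (X.σ 0 (X.δ 1 f)) = X.δ 1 f) :
    compE (X.σ 0 (X.δ 1 f)) f h = f := by
  set τ := X.map (SimplexCategory.σ (0 : Fin 2)).op f with hτ
  have key : X.spine 2 τ = path₂ (X.σ 0 (X.δ 1 f)) f h := by
    apply Path.ext'
    intro i
    fin_cases i
    · show X.map (mkOfSucc (0 : Fin 2)).op τ = _
      rw [hτ, ← FunctorToTypes.map_comp_apply, ← op_comp]
      have : mkOfSucc (0 : Fin 2) ≫ SimplexCategory.σ (0 : Fin 2) =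
          (SimplexCategory.σ (0 : Fin 1) : (⦋1⦌:SimplexCategory) ⟶ ⦋0⦌) ≫ SimplexCategory.δ (1 : Fin 2) :=
        Hom.ext_one_left _ _
      rw [this, op_comp, FunctorToTypes.map_comp_apply]
      rfl
    · show X.map (mkOfSucc (1 : Fin 2)).op τ = _
      rw [hτ, ← FunctorToTypes.map_comp_apply, ← op_comp]
      have : mkOfSucc (1 : Fin 2) ≫ SimplexCategory.σ (0 : Fin 2) = 𝟙 _ :=
        Hom.ext_one_left _ _
      rw [this, op_id, FunctorToTypes.map_id_apply]
      rfl
  rw [compE, ← key, spineToDiagonal, spineToSimplex_spine, SimplicialObject.diagonal,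
    ← FunctorToTypes.map_comp_apply, ← op_comp]
  have : diag 2 ≫ SimplexCategory.σ (0 : Fin 2) = 𝟙 _ := Hom.ext_one_left _ _
  rw [this, op_id, FunctorToTypes.map_id_apply]

lemma compE_id_right (f : X _⦋1⦌) (h : X.δ 0 f = X.δ 1 (X.σ 0 (X.δ 0 f))) :
    compE f (X.σ 0 (X.δ 0 f)) h = f := by
  set τ := X.map (SimplexCategory.σ (1 : Fin 2)).op f with hτ
  have key : X.spine 2 τ = path₂ f (X.σ 0 (X.δ 0 f)) h := by
    apply Path.ext'
    intro i
    fin_cases i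
    · show X.map (mkOfSucc (0 : Fin 2)).op τ = _
      rw [hτ, ← FunctorToTypes.map_comp_apply, ← op_comp]
      have : mkOfSucc (0 : Fin 2) ≫ SimplexCategory.σ (1 : Fin 2) = 𝟙 _ :=
        Hom.ext_one_left _ _
      rw [this, op_id, FunctorToTypes.map_id_apply]
      rfl
    · show X.map (mkOfSucc (1 : Fin 2)).op τ = _
      rw [hτ, ← FunctorToTypes.map_comp_apply, ← op_comp]
      have : mkOfSucc (1 : Fin 2) ≫ SimplexCategory.σ (1 : Fin 2) =
          (SimplexCategory.σ (0 : Fin 1) : (⦋1⦌:SimplexCategory) ⟶ ⦋0⦌) ≫ SimplexCategory.δ (0 : Fin 2) :=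
        Hom.ext_one_left _ _
      rw [this, op_comp, FunctorToTypes.map_comp_apply]
      rfl
  rw [compE, ← key, spineToDiagonal, spineToSimplex_spine, SimplicialObject.diagonal,
    ← FunctorToTypes.map_comp_apply, ← op_comp]
  have : diag 2 ≫ SimplexCategory.σ (1 : Fin 2) = 𝟙 _ := Hom.ext_one_left _ _
  rw [this, op_id, FunctorToTypes.map_id_apply]

lemma δ_one_σ_zero (a : X _⦋0⦌) : X.δ 1 (X.σ 0 a) = a := by
  rw [SimplicialObject.δ, SimplicialObject.σ, ← FunctorToTypes.map_comp_apply, ← op_comp]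
  have : (δ 1 : (⦋0⦌:SimplexCategory) ⟶ ⦋1⦌) ≫ SimplexCategory.σ 0 = 𝟙 _ :=
    Hom.ext_zero_left _ _ (by apply @Subsingleton.elim (Fin 1))
  rw [this, op_id, FunctorToTypes.map_id_apply]

lemma δ_zero_σ_zero (a : X _⦋0⦌) : X.δ 0 (X.σ 0 a) = a := by
  rw [SimplicialObject.δ, SimplicialObject.σ, ← FunctorToTypes.map_comp_apply, ← op_comp]
  have : (δ 0 : (⦋0⦌:SimplexCategory) ⟶ ⦋1⦌) ≫ SimplexCategory.σ 0 = 𝟙 _ :=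
    Hom.ext_zero_left _ _ (by apply @Subsingleton.elim (Fin 1))
  rw [this, op_id, FunctorToTypes.map_id_apply]

def triple (f g h : X _⦋1⦌) : Fin 3 → X _⦋1⦌ := ![f, g, h]

def path₃ (f g h : X _⦋1⦌) (hfg : X.δ 0 f = X.δ 1 g) (hgh : X.δ 0 g = X.δ 1 h) :
    Path X 3 :=
  mkPath' (triple f g h) (by
    intro i
    fin_cases i
    · exact hfg
    · exact hgh)

lemma compE_assoc (f g h : X _⦋1⦌) (hfg : X.δ 0 f = X.δ 1 g) (hgh : X.δ 0 g = X.δ 1 h)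
    (h1 : X.δ 0 (compE f g hfg) = X.δ 1 h) (h2 : X.δ 0 f = X.δ 1 (compE g h hgh)) :
    compE (compE f g hfg) h h1 = compE f (compE g h hgh) h2 := by
  set Δ := spineToSimplex (path₃ f g h hfg hgh) with hΔ
  have e01 : X.map (mkOfLe (0 : Fin 4) 1 (by decide)).op Δ = f := by
    have : mkOfLe (0 : Fin 4) 1 (by decide) = mkOfSucc (0 : Fin 3) := Hom.ext_one_left _ _
    rw [this, hΔ, spineToSimplex_arrow]
    rfl
  have e12 : X.map (mkOfLe (1 : Fin 4) 2 (by decide)).op Δ = g := by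
    have : mkOfLe (1 : Fin 4) 2 (by decide) = mkOfSucc (1 : Fin 3) := Hom.ext_one_left _ _
    rw [this, hΔ, spineToSimplex_arrow]
    rfl
  have e23 : X.map (mkOfLe (2 : Fin 4) 3 (by decide)).op Δ = h := by
    have : mkOfLe (2 : Fin 4) 3 (by decide) = mkOfSucc (2 : Fin 3) := Hom.ext_one_left _ _
    rw [this, hΔ, spineToSimplex_arrow]
    rfl
  have c02 : compE f g hfg = X.map (mkOfLe (0 : Fin 4) 2 (by decide)).op Δ := by
    rw [show (mkOfLe (0 : Fin 4) 2 (by decide)) =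
      (mkOfLe (0 : Fin 4) 2 ((by decide : (0:Fin 4) ≤ 1).trans (by decide))) from rfl]
    rw [edge_comp Δ 0 1 2 (by decide) (by decide)]
    exact compE_congr e01.symm e12.symm _ _
  have c13 : compE g h hgh = X.map (mkOfLe (1 : Fin 4) 3 (by decide)).op Δ := by
    rw [show (mkOfLe (1 : Fin 4) 3 (by decide)) =
      (mkOfLe (1 : Fin 4) 3 ((by decide : (1:Fin 4) ≤ 2).trans (by decide))) from rfl]
    rw [edge_comp Δ 1 2 3 (by decide) (by decide)]
    exact compE_congr e12.symm e23.symm _ _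
  have l1 : compE (compE f g hfg) h h1 = X.map (mkOfLe (0 : Fin 4) 3 (by decide)).op Δ := by
    rw [show (mkOfLe (0 : Fin 4) 3 (by decide)) =
      (mkOfLe (0 : Fin 4) 3 ((by decide : (0:Fin 4) ≤ 2).trans (by decide))) from rfl]
    rw [edge_comp Δ 0 2 3 (by decide) (by decide)]
    exact compE_congr c02 e23.symm _ _
  have l2 : compE f (compE g h hgh) h2 = X.map (mkOfLe (0 : Fin 4) 3 (by decide)).op Δ := by
    rw [show (mkOfLe (0 : Fin 4) 3 (by decide)) =
      (mkOfLe (0 : Fin 4) 3 ((by decide : (0:Fin 4) ≤ 1).trans (by decide))) from rfl]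
    rw [edge_comp Δ 0 1 3 (by decide) (by decide)]
    exact compE_congr e01.symm c13 _ _
  rw [l1, l2]

/-- The hom-sets of the homotopy category. -/
def HomX (a b : X _⦋0⦌) : Type :=
  { e : X.obj (Opposite.op (SimplexCategory.mk 1)) // X.δ 1 e = a ∧ X.δ 0 e = b }

noncomputable def homId (a : X _⦋0⦌) : HomX a a :=
  ⟨X.σ 0 a, δ_one_σ_zero a, δ_zero_σ_zero a⟩

noncomputable def homComp {a b c : X _⦋0⦌} (f : HomX a b) (g : HomX b c) : HomX a c :=
  ⟨compE f.1 g.1 (f.2.2.trans g.2.1.symm),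
    by rw [δ_one_compE]; exact f.2.1, by rw [δ_zero_compE]; exact g.2.2⟩

/-- The homotopy category of a strict Segal simplicial set. -/
def CatX (X : SSet.{0}) [SSC X] : Type := X _⦋0⦌

noncomputable instance : CategoryStruct (CatX X) where
  Hom a b := HomX a b
  id a := homId a
  comp {a b c} f g := homComp (X := X) (a := a) (b := b) (c := c) f g

/-- Extract the underlying edge of a morphism of `CatX`. -/
def edgeOf {a b : CatX X} (f : a ⟶ b) : HomX a b := f

noncomputable instance : SmallCategory (CatX X) where
  id_comp {a b} f := Subtype.ext (by
    show compE (X.σ 0 a) (edgeOf f).1 _ = (edgeOf f).1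
    have ha : X.σ 0 a = X.σ 0 (X.δ 1 (edgeOf f).1) := by rw [(edgeOf f).2.1]
    refine (compE_congr ha rfl _ (by rw [δ_zero_σ_zero])).trans ?_
    exact compE_id_left (edgeOf f).1 _)
  comp_id {a b} f := Subtype.ext (by
    show compE (edgeOf f).1 (X.σ 0 b) _ = (edgeOf f).1
    have hb : X.σ 0 b = X.σ 0 (X.δ 0 (edgeOf f).1) := by rw [(edgeOf f).2.2]
    refine (compE_congr rfl hb _ (by rw [δ_one_σ_zero])).trans ?_
    exact compE_id_right (edgeOf f).1 _)
  assoc {a b c d} f g h := Subtype.ext (by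
    show compE (compE (edgeOf f).1 (edgeOf g).1 _) (edgeOf h).1 _ =
      compE (edgeOf f).1 (compE (edgeOf g).1 (edgeOf h).1 _) _
    exact compE_assoc (edgeOf f).1 (edgeOf g).1 (edgeOf h).1 _ _ _ _)

/-- The path associated to a string of composable arrows. -/
def pathOf {n : ℕ} (F : ComposableArrows (CatX X) n) : Path X n where
  vertex i := F.obj i
  arrow i := (edgeOf (F.map (homOfLE i.castSucc_le_succ))).1
  arrow_src i := (edgeOf (F.map (homOfLE i.castSucc_le_succ))).2.1
  arrow_tgt i := (edgeOf (F.map (homOfLE i.castSucc_le_succ))).2.2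

lemma map_homOfLE_eq {n : ℕ} (F : ComposableArrows (CatX X) n) (a b : Fin (n+1)) (hab : a ≤ b) :
    (edgeOf (F.map (homOfLE hab))).1 = X.map (mkOfLe a b hab).op (spineToSimplex (pathOf F)) := by
  suffices h : ∀ (k : ℕ) (b : Fin (n+1)) (hab : a ≤ b), b.1 - a.1 = k →
      (edgeOf (F.map (homOfLE hab))).1 = X.map (mkOfLe a b hab).op (spineToSimplex (pathOf F))
    from h _ b hab rfl
  intro k
  induction k with
  | zero =>
    intro b hab hd
    have hab' : a.1 ≤ b.1 := hab
    have : a = b := Fin.ext (by omega)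
    subst this
    have h1 : homOfLE hab = 𝟙 a := rfl
    rw [h1, F.map_id]
    show (X.σ 0 (F.obj a) : X _⦋1⦌) = _
    have h2 : mkOfLe a a hab = const ⦋1⦌ ⦋n⦌ a := Hom.ext_one_left _ _
    rw [h2, const_fac_thru_zero, op_comp, FunctorToTypes.map_comp_apply, spineToSimplex_vertex]
    have h3 : const ⦋1⦌ ⦋0⦌ 0 = SimplexCategory.σ (0 : Fin 1) := (eq_const_to_zero _).symm
    rw [h3]
    rfl
  | succ k ih =>
    intro b hab hd
    have hab' : a.1 ≤ b.1 := hab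
    have hb : 0 < b.1 := by omega
    have hbn : b.1 ≤ n := Nat.lt_succ_iff.mp b.2
    have hbi : b.1 - 1 < n := by omega
    obtain ⟨j, rfl⟩ : ∃ j : Fin n, b = j.succ :=
      ⟨⟨b.1 - 1, hbi⟩, Fin.ext (by simp; omega)⟩
    have hj : (j.succ : ℕ) = j.1 + 1 := rfl
    have h1 : a ≤ j.castSucc := by
      rw [Fin.le_def]
      show a.1 ≤ j.1
      omega
    have h2 : j.castSucc ≤ j.succ := j.castSucc_le_succ
    have e1 : (edgeOf (F.map (homOfLE h2))).1 =
        X.map (mkOfLe _ _ h2).op (spineToSimplex (pathOf F)) := by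
      have hmk : mkOfLe _ _ h2 = mkOfSucc j := Hom.ext_one_left _ _
      rw [hmk, spineToSimplex_arrow]
      rfl
    have hcomp : homOfLE hab = homOfLE h1 ≫ homOfLE h2 := rfl
    rw [show (mkOfLe a j.succ hab) = (mkOfLe a j.succ (h1.trans h2)) from rfl,
      edge_comp (spineToSimplex (pathOf F)) a j.castSucc j.succ h1 h2, hcomp, F.map_comp]
    show compE (edgeOf (F.map (homOfLE h1))).1 (edgeOf (F.map (homOfLE h2))).1 _ = _
    refine compE_congr (ih _ h1 (by simp [Fin.le_def] at hab' hd ⊢; omega)) e1 _ _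


/-- Comparison of morphisms of `CatX` along equalities of endpoints. -/
lemma hom_cast {a b a' b' : CatX X} (ha : a = a') (hb : b = b') (u : a ⟶ b) (v : a' ⟶ b')
    (h : (edgeOf u).1 = (edgeOf v).1) : u = eqToHom ha ≫ v ≫ eqToHom hb.symm := by
  subst ha
  subst hb
  rw [eqToHom_refl, eqToHom_refl, Category.id_comp, Category.comp_id]
  exact Subtype.ext h

/-- The string of composable arrows associated to a simplex. -/
noncomputable def toCA {n : ℕ} (σ : X _⦋n⦌) : ComposableArrows (CatX X) n :=
  ComposableArrows.mkOfObjOfMapSucc (fun i => ((X.spine n σ).vertex i : CatX X))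
    (fun i => ⟨(X.spine n σ).arrow i, (X.spine n σ).arrow_src i, (X.spine n σ).arrow_tgt i⟩)

lemma toCA_map_succ {n : ℕ} (σ : X _⦋n⦌) (i : ℕ) (hi : i < n) :
    (toCA σ).map' i (i+1) (by omega) (by omega) =
      ⟨(X.spine n σ).arrow ⟨i, hi⟩, (X.spine n σ).arrow_src ⟨i, hi⟩,
        (X.spine n σ).arrow_tgt ⟨i, hi⟩⟩ :=
  ComposableArrows.mkOfObjOfMapSucc_map_succ _ _ i hi

lemma pathOf_toCA {n : ℕ} (σ : X _⦋n⦌) : pathOf (toCA σ) = X.spine n σ := by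
  ext i
  · rfl
  · show (edgeOf ((toCA σ).map (homOfLE i.castSucc_le_succ))).1 = _
    have h := toCA_map_succ σ i.1 i.2
    exact congrArg (fun u => (edgeOf u).1) h

lemma toCA_sts {n : ℕ} (F : ComposableArrows (CatX X) n) : toCA (spineToSimplex (pathOf F)) = F := by
  have hspine : X.spine n (spineToSimplex (pathOf F)) = pathOf F := spine_spineToSimplex _
  have hobj : ∀ i, (toCA (spineToSimplex (pathOf F))).obj i = F.obj i := by
    intro i
    show (X.spine n (spineToSimplex (pathOf F))).vertex i = F.obj i
    rw [hspine]
    rfl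
  refine ComposableArrows.ext hobj ?_
  intro i hi
  refine hom_cast (hobj _) (hobj _) _ _ ?_
  have h := toCA_map_succ (spineToSimplex (pathOf F)) i hi
  have h2 : (edgeOf ((toCA (spineToSimplex (pathOf F))).map' i (i+1))).1 =
      (X.spine n (spineToSimplex (pathOf F))).arrow ⟨i, hi⟩ :=
    congrArg (fun u => (edgeOf u).1) h
  rw [h2, hspine]
  rfl

lemma naturality_aux {m n : ℕ} (ψ : (⦋m⦌ : SimplexCategory) ⟶ ⦋n⦌)
    (F : ComposableArrows (CatX X) n) :
    spineToSimplex (pathOf ((F.whiskerLeft (SimplexCategory.toCat.map ψ).toFunctor : ComposableArrows (CatX X) m))) =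
      X.map ψ.op (spineToSimplex (pathOf F)) := by
  apply spineInjective (X := X) (n := m)
  show X.spine m _ = X.spine m _
  ext i
  · rw [spine_vertex, spine_vertex, spineToSimplex_vertex, ← FunctorToTypes.map_comp_apply,
      ← op_comp, SimplexCategory.const_comp, spineToSimplex_vertex]
    rfl
  · rw [spine_arrow, spine_arrow, spineToSimplex_arrow, ← FunctorToTypes.map_comp_apply,
      ← op_comp]
    have hmono : ψ.toOrderHom i.castSucc ≤ ψ.toOrderHom i.succ :=
      ψ.toOrderHom.monotone i.castSucc_le_succ
    rw [show mkOfSucc i ≫ ψ = mkOfLe _ _ hmono from Hom.ext_one_left _ _,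
      ← map_homOfLE_eq]
    rfl

noncomputable def nerveEquiv (n : ℕ) : ComposableArrows (CatX X) n ≃ X _⦋n⦌ where
  toFun F := spineToSimplex (pathOf F)
  invFun := toCA
  left_inv := toCA_sts
  right_inv σ := by dsimp only; rw [pathOf_toCA, spineToSimplex_spine]

noncomputable def nerveIso (X : SSet.{0}) [SSC X] : X ≅ nerve (CatX X) :=
  (NatIso.ofComponents (fun Δ => Equiv.toIso (nerveEquiv Δ.unop.len))
    (by
      intro Δ Δ' φ
      ext F
      exact naturality_aux (m := Δ'.unop.len) (n := Δ.unop.len) φ.unop F)).symm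


end Segal

/-- a simplicial set is isomorphic to the nerve of a small category
iff for every `n ≥ 2` the Segal map `X_n → X_1 ×_{X_0} ⋯ ×_{X_0} X_1` is a
bijection (i.e. it is injective, and every composable tuple of edges is the
spine of a unique `n`-simplex). -/
theorem iso_nerve_iff_segal_bijective (X : SSet.{0}) :
    (∃ (C : Type) (_ : SmallCategory C), Nonempty (X ≅ nerve C)) ↔
    ∀ n : ℕ, 2 ≤ n →
      Function.Injective (segalMap X n) ∧
      ∀ f : Fin n → X _⦋1⦌, Composable X n f → ∃ σ : X _⦋n⦌, segalMap X n σ = f := by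
  constructor
  · rintro ⟨C, instC, ⟨e⟩⟩ n hn
    obtain ⟨m, rfl⟩ : ∃ m, n = m + 1 := ⟨n - 1, by omega⟩
    constructor
    · intro σ σ' hseg
      have harr : ∀ i : Fin (m+1), (nerve C).map (SimplexCategory.mkOfSucc i).op
            (e.hom.app _ σ) =
          (nerve C).map (SimplexCategory.mkOfSucc i).op (e.hom.app _ σ') := by
        intro i
        rw [← FunctorToTypes.naturality, ← FunctorToTypes.naturality]
        exact congrArg (e.hom.app _) (congrFun hseg i)
      have hsp : (nerve C).spine (m+1) (e.hom.app _ σ) =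
          (nerve C).spine (m+1) (e.hom.app _ σ') :=
        Path.ext' (X := nerve C) (fun i => harr i)
      have h2 : e.hom.app _ σ = e.hom.app _ σ' := spineInjective hsp
      have h3 := congrArg (e.inv.app (Opposite.op ⦋m+1⦌)) h2
      simpa using h3
    · intro f hcomp
      have hc : ∀ i : Fin m, X.δ 0 (f i.castSucc) = X.δ 1 (f i.succ) := by
        intro i
        rw [dzero_eq_const, done_eq_const]
        exact hcomp i.castSucc i.succ rfl
      refine ⟨e.inv.app _ (spineToSimplex (X := nerve C) ((mkPath' f hc).map e.hom)), ?_⟩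
      funext i
      show X.map (SimplexCategory.mkOfSucc i).op (e.inv.app _ _) = f i
      rw [← FunctorToTypes.naturality]
      have h4 : (nerve C).map (SimplexCategory.mkOfSucc i).op
          (spineToSimplex ((mkPath' f hc).map e.hom)) = ((mkPath' f hc).map e.hom).arrow i :=
        spineToSimplex_arrow i _
      rw [h4]
      show e.inv.app _ (e.hom.app _ ((mkPath' f hc).arrow i)) = f i
      simp [mkPath']
  · intro H
    letI : SSC X := ⟨mkSS X H⟩
    exact ⟨CatX X, inferInstance, ⟨nerveIso X⟩⟩

end Stmt0
end

section
/- Fix an injective map f : Fin k → ℝ^m. Let Y be the space of continuous paths γ : [0,1] → (Fin k → ℝ^m) such that γ(0) = f, γ(1) is the constant map 0, and for all s ≤ t in [0,1], the partition of Fin k induced by γ(t) (two indices equivalent iff γ(t) sends them to the same point) refines backwards: if γ(s)(i) = γ(s)(j) then γ(t)(i) = γ(t)(j). Then Y is contractible. An explicit contraction exists: Y deformation retracts to the straight-line path γ₀(t)(j) = t · f(j) via the homotopy h_s(α)(t)(j) = s · α(t/s)(j) for t < s and h_s(α)(t)(j) = t · f(j) for t ≥ s. -/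
open Function unitInterval Set

namespace ExitPathsAux

/-- The space of reversed exit paths. -/
def Ysp (k m : ℕ) (f : Fin k → Fin m → ℝ) :=
  {γ : C(unitInterval, Fin k → Fin m → ℝ) //
    γ 0 = f ∧ γ 1 = 0 ∧
    ∀ s t : unitInterval, s ≤ t →
      ∀ i j : Fin k, γ s i = γ s j → γ t i = γ t j}

instance (k m : ℕ) (f : Fin k → Fin m → ℝ) : TopologicalSpace (Ysp k m f) :=
  instTopologicalSpaceSubtype

/-- scalar coefficient of the homotopy -/
noncomputable def cf (s t : ℝ) : ℝ := min ((1 - t) / max s (1 - t)) 1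

/-- time reparametrization of the homotopy -/
noncomputable def uf (s t : unitInterval) : unitInterval :=
  projIcc 0 1 zero_le_one (min (t : ℝ) (1 - (s : ℝ)))

lemma cf_nonneg (s t : unitInterval) : 0 ≤ cf s t := by
  refine le_min (div_nonneg ?_ ?_) zero_le_one
  · linarith [t.2.2]
  · exact le_trans (by linarith [t.2.2]) (le_max_right _ _)

lemma cf_le_one (s t : ℝ) : cf s t ≤ 1 := min_le_right _ _

lemma cf_at_zero (s : unitInterval) : cf s 0 = 1 := by
  rw [cf, show (1:ℝ) - 0 = 1 by norm_num, max_eq_right s.2.2]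
  norm_num

lemma cf_at_one (s : ℝ) : cf s 1 = 0 := by simp [cf]

lemma cf_eq_zero {s t : unitInterval} (h : cf s t = 0) : (t : ℝ) = 1 := by
  by_contra ht
  have ht1 : (t : ℝ) < 1 := lt_of_le_of_ne t.2.2 ht
  have h1 : (0 : ℝ) < 1 - t := by linarith
  have h2 : (0 : ℝ) < max (s : ℝ) (1 - t) := lt_of_lt_of_le h1 (le_max_right _ _)
  have : 0 < cf s t := lt_min (div_pos h1 h2) one_pos
  exact absurd h (ne_of_gt this)

lemma uf_mono (s : unitInterval) {t t' : unitInterval} (h : t ≤ t') :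
    uf s t ≤ uf s t' := by
  exact monotone_projIcc zero_le_one (min_le_min_right _ h)

variable (k m : ℕ) (f : Fin k → Fin m → ℝ)

/-- the underlying function of the homotopy -/
noncomputable def Gf (q : (unitInterval × Ysp k m f) × unitInterval) :
    Fin k → Fin m → ℝ :=
  cf q.1.1 q.2 • (q.1.2.1 : C(unitInterval, Fin k → Fin m → ℝ)) (uf q.1.1 q.2)

lemma continuous_beta :
    Continuous fun q : (unitInterval × Ysp k m f) × unitInterval =>
      (q.1.2.1 : C(unitInterval, Fin k → Fin m → ℝ)) (uf q.1.1 q.2) := by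
  apply Continuous.eval
  · exact continuous_subtype_val.comp (continuous_snd.comp continuous_fst)
  · apply (continuous_projIcc).comp
    fun_prop

lemma continuous_Gf : Continuous (Gf k m f) := by
  rw [continuous_iff_continuousAt]
  rintro ⟨⟨s, α⟩, t⟩
  by_cases hc : (s : ℝ) = 0 ∧ (t : ℝ) = 1
  · -- corner case: squeeze
    obtain ⟨hs, ht⟩ := hc
    have hG0 : Gf k m f ((s, α), t) = 0 := by
      have : cf s t = 0 := by rw [hs, ht]; simp [cf]
      simp [Gf, this]
    have key : Filter.Tendsto (Gf k m f) (nhds ((s, α), t)) (nhds 0) := by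
      refine squeeze_zero_norm
        (a := fun q : (unitInterval × Ysp k m f) × unitInterval =>
          ‖(q.1.2.1 : C(unitInterval, Fin k → Fin m → ℝ)) (uf q.1.1 q.2)‖) ?_ ?_
      · intro q
        rw [Gf, norm_smul]
        calc ‖cf q.1.1 q.2‖ * ‖(q.1.2.1 : C(unitInterval, Fin k → Fin m → ℝ)) (uf q.1.1 q.2)‖
            ≤ 1 * ‖(q.1.2.1 : C(unitInterval, Fin k → Fin m → ℝ)) (uf q.1.1 q.2)‖ := by
              apply mul_le_mul_of_nonneg_right _ (norm_nonneg _)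
              rw [Real.norm_eq_abs, abs_of_nonneg (cf_nonneg _ _)]
              exact cf_le_one _ _
          _ = _ := one_mul _
      · have hlim : (α.1 : C(unitInterval, Fin k → Fin m → ℝ)) (uf s t) = 0 := by
          have huf : uf s t = 1 := by
            rw [uf, hs, ht]
            rw [show min (1:ℝ) (1 - 0) = 1 by norm_num]
            exact projIcc_of_right_le _ le_rfl
          rw [huf, α.2.2.1]
        have h2 := ((continuous_beta k m f).norm).tendsto ((s, α), t)
        rwa [hlim, norm_zero] at h2
    unfold ContinuousAt
    rw [hG0]
    exact key
  · -- regular case: everything is continuous at this point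
    have hmax : max (s : ℝ) (1 - (t : ℝ)) ≠ 0 := by
      rcases not_and_or.mp hc with h | h
      · have : (0:ℝ) < s := lt_of_le_of_ne s.2.1 (Ne.symm h)
        exact ne_of_gt (lt_of_lt_of_le this (le_max_left _ _))
      · have : (t:ℝ) < 1 := lt_of_le_of_ne t.2.2 h
        exact ne_of_gt (lt_of_lt_of_le (by linarith) (le_max_right _ _))
    have hcCA : ContinuousAt
        (fun q : (unitInterval × Ysp k m f) × unitInterval =>
          cf q.1.1 q.2) ((s, α), t) := by
      have h1 : ContinuousAt
          (fun q : (unitInterval × Ysp k m f) × unitInterval =>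
            (1 - (q.2 : ℝ)) / max (q.1.1 : ℝ) (1 - (q.2 : ℝ))) ((s, α), t) :=
        ContinuousAt.div (by fun_prop) (by fun_prop) hmax
      exact Filter.Tendsto.min h1 continuousAt_const
    exact ContinuousAt.smul hcCA (continuous_beta k m f).continuousAt

lemma Gf_mem (s : unitInterval) (α : Ysp k m f) :
    (fun t => Gf k m f ((s, α), t)) 0 = f ∧
    (fun t => Gf k m f ((s, α), t)) 1 = 0 ∧
    ∀ s' t' : unitInterval, s' ≤ t' → ∀ i j : Fin k,
      Gf k m f ((s, α), s') i = Gf k m f ((s, α), s') j →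
      Gf k m f ((s, α), t') i = Gf k m f ((s, α), t') j := by
  obtain ⟨h0, h1, hcol⟩ := α.2
  refine ⟨?_, ?_, ?_⟩
  · show cf s (0:unitInterval) • _ = f
    have hu : uf s 0 = 0 := by
      rw [uf, show ((0:unitInterval):ℝ) = 0 from rfl,
        min_eq_left (by linarith [s.2.2] : (0:ℝ) ≤ 1 - (s:ℝ))]
      exact projIcc_of_le_left _ le_rfl
    rw [show ((0:unitInterval):ℝ) = 0 from rfl, cf_at_zero, hu, h0, one_smul]
  · show cf s (1:unitInterval) • _ = 0
    rw [show ((1:unitInterval):ℝ) = 1 from rfl, cf_at_one, zero_smul]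
  · intro s' t' hst i j hij
    by_cases hz : cf s s' = 0
    · -- then s' = 1, hence t' = 1 and both values are 0
      have hs1 : (s' : ℝ) = 1 := cf_eq_zero hz
      have ht1 : (t' : ℝ) = 1 := le_antisymm t'.2.2 (hs1 ▸ hst)
      show (cf (s:ℝ) (t':ℝ) • α.1 (uf s t')) i = (cf (s:ℝ) (t':ℝ) • α.1 (uf s t')) j
      rw [ht1, cf_at_one, zero_smul]
      rfl
    · -- cancel the scalar, use the exit-path property of α
      have hij' : α.1 (uf s s') i = α.1 (uf s s') j := by
        have h1 : cf s s' • α.1 (uf s s') i = cf s s' • α.1 (uf s s') j := hij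
        exact smul_right_injective (Fin m → ℝ) hz h1
      have := hcol _ _ (uf_mono s hst) i j hij'
      show (cf s t' • α.1 (uf s t')) i = (cf s t' • α.1 (uf s t')) j
      simp only [Pi.smul_apply, this]

/-- the straight-line path from f to 0 -/
noncomputable def gamma0 : C(unitInterval, Fin k → Fin m → ℝ) :=
  ⟨fun t => (1 - (t : ℝ)) • f, by fun_prop⟩

lemma gamma0_mem (hf : Injective f) :
    gamma0 k m f 0 = f ∧ gamma0 k m f 1 = 0 ∧
    ∀ s t : unitInterval, s ≤ t → ∀ i j : Fin k,
      gamma0 k m f s i = gamma0 k m f s j → gamma0 k m f t i = gamma0 k m f t j := by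
  refine ⟨?_, ?_, ?_⟩
  · show (1 - ((0:unitInterval):ℝ)) • f = f
    norm_num
  · show (1 - ((1:unitInterval):ℝ)) • f = 0
    norm_num
  · intro s t hst i j hij
    by_cases hs1 : (s : ℝ) = 1
    · have ht1 : (t : ℝ) = 1 := le_antisymm t.2.2 (hs1 ▸ hst)
      show ((1 - (t:ℝ)) • f) i = ((1 - (t:ℝ)) • f) j
      rw [ht1]; norm_num
    · have hne : (1 - (s:ℝ)) ≠ 0 := by
        have : (s:ℝ) < 1 := lt_of_le_of_ne s.2.2 hs1
        linarith
      have : f i = f j := by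
        have h1 : (1 - (s:ℝ)) • f i = (1 - (s:ℝ)) • f j := hij
        exact smul_right_injective (Fin m → ℝ) hne h1
      have : i = j := hf this
      rw [this]

/-- the contraction, as a bundled continuous map -/
noncomputable def Hmap : C(unitInterval × Ysp k m f, Ysp k m f) :=
  { toFun := fun p =>
      ⟨(ContinuousMap.mk (Gf k m f) (continuous_Gf k m f)).curry p,
        Gf_mem k m f p.1 p.2⟩
    continuous_toFun := by
      apply Continuous.subtype_mk
      exact (ContinuousMap.mk (Gf k m f) (continuous_Gf k m f)).curry.continuous }

lemma Hmap_zero (α : Ysp k m f) : Hmap k m f (0, α) = α := by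
  apply Subtype.ext
  apply ContinuousMap.ext
  intro t
  show Gf k m f ((0, α), t) = α.1 t
  by_cases ht : (t : ℝ) = 1
  · have ht' : t = 1 := Subtype.ext ht
    have hcf : cf (0:unitInterval) t = 0 := by
      rw [ht]; exact cf_at_one _
    rw [Gf, hcf, zero_smul, ht', α.2.2.1]
  · have ht1 : (t : ℝ) < 1 := lt_of_le_of_ne t.2.2 ht
    have hcf : cf (0:unitInterval) t = 1 := by
      rw [cf, show ((0:unitInterval):ℝ) = 0 from rfl,
        max_eq_right (by linarith : (0:ℝ) ≤ 1 - t),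
        div_self (by linarith : (1:ℝ) - t ≠ 0), min_self]
    have hu : uf 0 t = t := by
      rw [uf, show ((0:unitInterval):ℝ) = 0 from rfl]
      rw [min_eq_left (by linarith [t.2.2] : (t:ℝ) ≤ 1 - 0)]
      exact projIcc_val zero_le_one t
    rw [Gf, hcf, hu, one_smul]

lemma Hmap_one (α : Ysp k m f) :
    (Hmap k m f (1, α)).1 = gamma0 k m f := by
  apply ContinuousMap.ext
  intro t
  show Gf k m f ((1, α), t) = (1 - (t:ℝ)) • f
  have hc1 : ((1:unitInterval):ℝ) = 1 := rfl
  have hcf : cf ((1:unitInterval):ℝ) (t:ℝ) = 1 - (t:ℝ) := by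
    rw [cf, hc1, max_eq_left (by linarith [t.2.1] : 1 - (t:ℝ) ≤ 1), div_one]
    exact min_eq_left (by linarith [t.2.1])
  have hu : uf 1 t = 0 := by
    rw [uf, hc1, min_eq_right (by linarith [t.2.1] : (1:ℝ) - 1 ≤ (t:ℝ))]
    rw [show (1:ℝ) - 1 = 0 by norm_num]
    exact projIcc_of_le_left _ le_rfl
  rw [Gf, hcf, hu, α.2.1]

end ExitPathsAux

/-- For an injective configuration `f : Fin k → ℝ^m`, the space of
(reversed) exit paths from `f` to the constant configuration at the origin — i.e.
continuous paths `γ : [0,1] → (Fin k → ℝ^m)` with `γ 0 = f`, `γ 1 = 0`, and such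
that collisions happening at time `s` persist at any later time `t` — is
contractible. -/
theorem exit_paths_to_origin_contractible
    (k m : ℕ) (f : Fin k → Fin m → ℝ) (hf : Injective f) :
    ContractibleSpace
      {γ : C(unitInterval, Fin k → Fin m → ℝ) //
        γ 0 = f ∧ γ 1 = 0 ∧
        ∀ s t : unitInterval, s ≤ t →
          ∀ i j : Fin k, γ s i = γ s j → γ t i = γ t j} := by
  show ContractibleSpace (ExitPathsAux.Ysp k m f)
  rw [contractible_iff_id_nullhomotopic]
  refine ⟨⟨ExitPathsAux.gamma0 k m f, ExitPathsAux.gamma0_mem k m f hf⟩, ⟨?_⟩⟩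
  exact
    { toContinuousMap := ExitPathsAux.Hmap k m f
      map_zero_left := fun α => ExitPathsAux.Hmap_zero k m f α
      map_one_left := fun α => Subtype.ext (ExitPathsAux.Hmap_one k m f α) }
end

section
/- A model structure on a fixed category is uniquely determined by its class of cofibrations together with its class of fibrant objects: if two model structures on the same category have the same cofibrations and the same fibrant objects, then they have the same weak equivalences and fibrations, hence coincide. -/
open CategoryTheory CategoryTheory.Limits

universe v u

namespace Stmt5

variable {C : Type u} [Category.{v} C]

/-- `f` is a retract of `g` in the arrow category. -/
def IsRetract {X Y X' Y' : C} (f : X ⟶ Y) (g : X' ⟶ Y') : Prop :=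
  ∃ (i : X ⟶ X') (r : X' ⟶ X) (j : Y ⟶ Y') (s : Y' ⟶ Y),
    i ≫ r = 𝟙 X ∧ j ≫ s = 𝟙 Y ∧ i ≫ g = f ≫ j ∧ r ≫ f = g ≫ s

/-- A (Quillen) model structure on a category `C`: three classes of morphisms
(weak equivalences, cofibrations, fibrations) satisfying the two-out-of-three
axiom, closure under retracts, the lifting axioms and the factorization
axioms. -/
structure ModelStructure (C : Type u) [Category.{v} C] where
  W : MorphismProperty C
  Cof : MorphismProperty C
  Fib : MorphismProperty C
  w_of_iso : ∀ {X Y : C} (f : X ⟶ Y), IsIso f → W f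
  two_of_three_comp : ∀ {X Y Z : C} (f : X ⟶ Y) (g : Y ⟶ Z), W f → W g → W (f ≫ g)
  two_of_three_left : ∀ {X Y Z : C} (f : X ⟶ Y) (g : Y ⟶ Z), W g → W (f ≫ g) → W f
  two_of_three_right : ∀ {X Y Z : C} (f : X ⟶ Y) (g : Y ⟶ Z), W f → W (f ≫ g) → W g
  w_retract : ∀ {X Y X' Y' : C} (f : X ⟶ Y) (g : X' ⟶ Y'), IsRetract f g → W g → W f
  cof_retract : ∀ {X Y X' Y' : C} (f : X ⟶ Y) (g : X' ⟶ Y'), IsRetract f g → Cof g → Cof f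
  fib_retract : ∀ {X Y X' Y' : C} (f : X ⟶ Y) (g : X' ⟶ Y'), IsRetract f g → Fib g → Fib f
  lift : ∀ {A B X Y : C} (i : A ⟶ B) (p : X ⟶ Y), Cof i → Fib p → (W i ∨ W p) →
    HasLiftingProperty i p
  fact₁ : ∀ {X Y : C} (f : X ⟶ Y), ∃ (Z : C) (i : X ⟶ Z) (p : Z ⟶ Y),
    Cof i ∧ W i ∧ Fib p ∧ i ≫ p = f
  fact₂ : ∀ {X Y : C} (f : X ⟶ Y), ∃ (Z : C) (i : X ⟶ Z) (p : Z ⟶ Y),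
    Cof i ∧ Fib p ∧ W p ∧ i ≫ p = f

namespace ModelStructure

variable (M : ModelStructure C)

lemma w_id (X : C) : M.W (𝟙 X) := M.w_of_iso _ inferInstance

/-- If `p` has the right lifting property against all cofibrations, then `p`
is a trivial fibration (retract argument using `fact₂`). -/
lemma fib_w_of_rlp {X Y : C} (p : X ⟶ Y)
    (h : ∀ ⦃A B : C⦄ (i : A ⟶ B), M.Cof i → HasLiftingProperty i p) :
    M.Fib p ∧ M.W p := by
  obtain ⟨Z, c, q, hc, hqF, hqW, hfac⟩ := M.fact₂ p
  haveI := h c hc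
  have sq : CommSq (𝟙 X) c p q := ⟨by simp [hfac]⟩
  have hr : IsRetract p q :=
    ⟨c, sq.lift, 𝟙 Y, 𝟙 Y, sq.fac_left, by simp, by simp [hfac], by simp [sq.fac_right]⟩
  exact ⟨M.fib_retract _ _ hr hqF, M.w_retract _ _ hr hqW⟩

/-- If `p` has the right lifting property against all trivial cofibrations,
then `p` is a fibration (retract argument using `fact₁`). -/
lemma fib_of_rlp {X Y : C} (p : X ⟶ Y)
    (h : ∀ ⦃A B : C⦄ (i : A ⟶ B), M.Cof i → M.W i → HasLiftingProperty i p) :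
    M.Fib p := by
  obtain ⟨Z, i, q, hiC, hiW, hqF, hfac⟩ := M.fact₁ p
  haveI := h i hiC hiW
  have sq : CommSq (𝟙 X) i p q := ⟨by simp [hfac]⟩
  exact M.fib_retract p q
    ⟨i, sq.lift, 𝟙 Y, 𝟙 Y, sq.fac_left, by simp, by simp [hfac], by simp [sq.fac_right]⟩ hqF

/-- If `i` has the left lifting property against all trivial fibrations,
then `i` is a cofibration (retract argument using `fact₂`). -/
lemma cof_of_llp {A B : C} (i : A ⟶ B)
    (h : ∀ ⦃X Y : C⦄ (p : X ⟶ Y), M.Fib p → M.W p → HasLiftingProperty i p) :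
    M.Cof i := by
  obtain ⟨Z, c, q, hcC, hqF, hqW, hfac⟩ := M.fact₂ i
  haveI := h q hqF hqW
  have sq : CommSq c i q (𝟙 B) := ⟨by simp [hfac]⟩
  exact M.cof_retract i c
    ⟨𝟙 A, 𝟙 A, sq.lift, q, by simp, sq.fac_right, by simp [sq.fac_left], by simp [hfac]⟩ hcC

lemma fib_comp {X Y Z : C} (p : X ⟶ Y) (q : Y ⟶ Z) (hp : M.Fib p) (hq : M.Fib q) :
    M.Fib (p ≫ q) :=
  M.fib_of_rlp _ (fun A B i hiC hiW => by
    haveI := M.lift i p hiC hp (Or.inl hiW)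
    haveI := M.lift i q hiC hq (Or.inl hiW)
    infer_instance)

lemma cof_comp {A B D : C} (i : A ⟶ B) (i' : B ⟶ D) (hi : M.Cof i) (hi' : M.Cof i') :
    M.Cof (i ≫ i') :=
  M.cof_of_llp _ (fun X Y p hpF hpW => by
    haveI := M.lift i p hi hpF (Or.inr hpW)
    haveI := M.lift i' p hi' hpF (Or.inr hpW)
    infer_instance)

end ModelStructure

section Joyal

variable [HasTerminal C]

/-- The key fibrant-fibrant case: a trivial cofibration of `N₂` between
`N₂`-fibrant objects is a weak equivalence of `N₁`, provided trivial
fibrations of `N₂` are weak equivalences of `N₁`. -/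
lemma w₁_of_trivCof₂_fibrant (N₁ N₂ : ModelStructure C)
    (tfW : ∀ ⦃A B : C⦄ (p : A ⟶ B), N₂.Fib p → N₂.W p → N₁.W p)
    {X Z : C} (j : X ⟶ Z) (hjc : N₂.Cof j) (hjw : N₂.W j)
    (hX : N₂.Fib (terminal.from X)) (hZ : N₂.Fib (terminal.from Z)) :
    N₁.W j := by
  -- a retraction `s` of `j`, using fibrancy of `X`
  haveI := N₂.lift j (terminal.from X) hjc hX (Or.inl hjw)
  have sq1 : CommSq (𝟙 X) j (terminal.from X) (terminal.from Z) :=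
    ⟨terminal.hom_ext _ _⟩
  set s : Z ⟶ X := sq1.lift with hs
  have hsW₂ : N₂.W s := N₂.two_of_three_right j s hjw (by rw [sq1.fac_left]; exact N₂.w_id X)
  -- factor `s = as ≫ bs` with `as` a trivial cofibration, `bs` a fibration
  obtain ⟨H, as, bs, hasC, hasW, hbsF, hfacs⟩ := N₂.fact₁ s
  have hbsW₂ : N₂.W bs := N₂.two_of_three_right as bs hasW (by rw [hfacs]; exact hsW₂)
  have hbsW₁ : N₁.W bs := tfW bs hbsF hbsW₂
  have hH : N₂.Fib (terminal.from H) := by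
    rw [show terminal.from H = bs ≫ terminal.from X from (terminal.hom_ext _ _)]
    exact N₂.fib_comp _ _ hbsF hX
  -- a retraction `rH` of `as`, using fibrancy of `Z`
  haveI := N₂.lift as (terminal.from Z) hasC hZ (Or.inl hasW)
  have sq2 : CommSq (𝟙 Z) as (terminal.from Z) (terminal.from H) :=
    ⟨terminal.hom_ext _ _⟩
  set rH : H ⟶ Z := sq2.lift with hrH
  have hrHW₂ : N₂.W rH :=
    N₂.two_of_three_right as rH hasW (by rw [sq2.fac_left]; exact N₂.w_id Z)
  -- factor `rH = a' ≫ b'`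
  obtain ⟨H', a', b', ha'C, ha'W, hb'F, hfacr⟩ := N₂.fact₁ rH
  have hb'W₂ : N₂.W b' := N₂.two_of_three_right a' b' ha'W (by rw [hfacr]; exact hrHW₂)
  have hb'W₁ : N₁.W b' := tfW b' hb'F hb'W₂
  -- a retraction `sm` of `a'`, using fibrancy of `H`
  haveI := N₂.lift a' (terminal.from H) ha'C hH (Or.inl ha'W)
  have sq3 : CommSq (𝟙 H) a' (terminal.from H) (terminal.from H') :=
    ⟨terminal.hom_ext _ _⟩
  set sm : H' ⟶ H := sq3.lift with hsm
  -- `as ≫ a'` is a section of the trivial fibration `b'`, hence in `W₁`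
  have haa'W₁ : N₁.W (as ≫ a') := by
    apply N₁.two_of_three_left (as ≫ a') b' hb'W₁
    have : (as ≫ a') ≫ b' = 𝟙 Z := by rw [Category.assoc, hfacr, sq2.fac_left]
    rw [this]; exact N₁.w_id Z
  -- `as` is a retract of `as ≫ a'`
  have hasW₁ : N₁.W as :=
    N₁.w_retract as (as ≫ a')
      ⟨𝟙 Z, 𝟙 Z, a', sm, by simp, sq3.fac_left, by simp,
        by rw [Category.id_comp, Category.assoc, sq3.fac_left, Category.comp_id]⟩ haa'W₁
  -- `j ≫ as` is a section of the trivial fibration `bs`, hence in `W₁`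
  have hjasW₁ : N₁.W (j ≫ as) := by
    apply N₁.two_of_three_left (j ≫ as) bs hbsW₁
    have : (j ≫ as) ≫ bs = 𝟙 X := by rw [Category.assoc, hfacs, sq1.fac_left]
    rw [this]; exact N₁.w_id X
  exact N₁.two_of_three_left j as hasW₁ hjasW₁

/-- A trivial cofibration of `N₂` with fibrant codomain is a weak equivalence
of `N₁`. -/
lemma w₁_of_trivCof₂_fibrantCod (N₁ N₂ : ModelStructure C)
    (tfW : ∀ ⦃A B : C⦄ (p : A ⟶ B), N₂.Fib p → N₂.W p → N₁.W p)
    (hfib : ∀ X : C, N₁.Fib (terminal.from X) ↔ N₂.Fib (terminal.from X))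
    {X X' : C} (ζ : X ⟶ X') (hc : N₂.Cof ζ) (hw : N₂.W ζ)
    (hX' : N₂.Fib (terminal.from X')) :
    N₁.W ζ := by
  -- factor `ζ = a ≫ b` in `N₁`
  obtain ⟨F, a, b, haC, haW, hbF, hfac1⟩ := N₁.fact₁ ζ
  have hF₁ : N₁.Fib (terminal.from F) := by
    rw [show terminal.from F = b ≫ terminal.from X' from (terminal.hom_ext _ _)]
    exact N₁.fib_comp _ _ hbF ((hfib X').mpr hX')
  have hF₂ : N₂.Fib (terminal.from F) := (hfib F).mp hF₁
  -- factor `b = γ ≫ δ` in `N₂`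
  obtain ⟨U, γ, δ, hγC, hγW, hδF, hfac2⟩ := N₂.fact₁ b
  have hU₂ : N₂.Fib (terminal.from U) := by
    rw [show terminal.from U = δ ≫ terminal.from X' from (terminal.hom_ext _ _)]
    exact N₂.fib_comp _ _ hδF hX'
  have hγW₁ : N₁.W γ := w₁_of_trivCof₂_fibrant N₁ N₂ tfW γ hγC hγW hF₂ hU₂
  have haγW₁ : N₁.W (a ≫ γ) := N₁.two_of_three_comp a γ haW hγW₁
  -- lift `ζ` against `δ` to exhibit `ζ` as a retract of `a ≫ γ`
  haveI := N₂.lift ζ δ hc hδF (Or.inl hw)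
  have sq : CommSq (a ≫ γ) ζ δ (𝟙 X') :=
    ⟨by rw [Category.comp_id, Category.assoc, hfac2, hfac1]⟩
  refine N₁.w_retract ζ (a ≫ γ)
    ⟨𝟙 X, 𝟙 X, sq.lift, δ, by simp, sq.fac_right, by simp [sq.fac_left], ?_⟩ haγW₁
  rw [Category.id_comp, Category.assoc, hfac2, hfac1]

/-- Any trivial cofibration of `N₂` is a weak equivalence of `N₁`. -/
lemma w₁_of_trivCof₂ (N₁ N₂ : ModelStructure C)
    (tfW : ∀ ⦃A B : C⦄ (p : A ⟶ B), N₂.Fib p → N₂.W p → N₁.W p)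
    (hfib : ∀ X : C, N₁.Fib (terminal.from X) ↔ N₂.Fib (terminal.from X))
    {X Z : C} (j : X ⟶ Z) (hc : N₂.Cof j) (hw : N₂.W j) :
    N₁.W j := by
  -- fibrant replacement of `Z` in `N₂`
  obtain ⟨Z', ζ, p, hζC, hζW, hpF, hfacp⟩ := N₂.fact₁ (terminal.from Z)
  have hZ' : N₂.Fib (terminal.from Z') := by
    rw [show terminal.from Z' = p from (terminal.hom_ext _ _)]; exact hpF
  have h1 : N₁.W ζ := w₁_of_trivCof₂_fibrantCod N₁ N₂ tfW hfib ζ hζC hζW hZ'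
  have h2 : N₁.W (j ≫ ζ) :=
    w₁_of_trivCof₂_fibrantCod N₁ N₂ tfW hfib (j ≫ ζ) (N₂.cof_comp j ζ hc hζC)
      (N₂.two_of_three_comp j ζ hw hζW) hZ'
  exact N₁.two_of_three_left j ζ h1 h2

end Joyal

/-- a model structure is uniquely determined by its cofibrations
together with its fibrant objects: two model structures on the same category
with the same cofibrations and the same fibrant objects have the same weak
equivalences and the same fibrations, hence coincide. -/
theorem modelStructure_eq_of_cof_eq_of_fibrant_eq
    [HasTerminal C] (M₁ M₂ : ModelStructure C)
    (hcof : M₁.Cof = M₂.Cof)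
    (hfib : ∀ X : C, M₁.Fib (terminal.from X) ↔ M₂.Fib (terminal.from X)) :
    M₁.W = M₂.W ∧ M₁.Fib = M₂.Fib := by
  -- trivial fibrations are shared
  have tf12 : ∀ ⦃A B : C⦄ (p : A ⟶ B), M₁.Fib p → M₁.W p → M₂.Fib p ∧ M₂.W p := by
    intro A B p hf hw
    refine M₂.fib_w_of_rlp p (fun A' B' i hi => ?_)
    exact M₁.lift i p (by rw [hcof]; exact hi) hf (Or.inr hw)
  have tf21 : ∀ ⦃A B : C⦄ (p : A ⟶ B), M₂.Fib p → M₂.W p → M₁.Fib p ∧ M₁.W p := by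
    intro A B p hf hw
    refine M₁.fib_w_of_rlp p (fun A' B' i hi => ?_)
    exact M₂.lift i p (by rw [← hcof]; exact hi) hf (Or.inr hw)
  -- trivial cofibrations of one are weak equivalences of the other
  have t21 : ∀ ⦃X Z : C⦄ (j : X ⟶ Z), M₂.Cof j → M₂.W j → M₁.W j :=
    fun X Z j hc hw =>
      w₁_of_trivCof₂ M₁ M₂ (fun A B p hf hw' => (tf21 p hf hw').2) hfib j hc hw
  have t12 : ∀ ⦃X Z : C⦄ (j : X ⟶ Z), M₁.Cof j → M₁.W j → M₂.W j :=
    fun X Z j hc hw =>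
      w₁_of_trivCof₂ M₂ M₁ (fun A B p hf hw' => (tf12 p hf hw').2)
        (fun X => (hfib X).symm) j hc hw
  -- weak equivalences agree
  have w12 : ∀ ⦃X Y : C⦄ (f : X ⟶ Y), M₁.W f → M₂.W f := by
    intro X Y f hf
    obtain ⟨E, i, p, hiC, hiW, hpF, hfac⟩ := M₁.fact₁ f
    have hpW₁ : M₁.W p := M₁.two_of_three_right i p hiW (by rw [hfac]; exact hf)
    have hiW₂ : M₂.W i := t12 i hiC hiW
    have hpW₂ : M₂.W p := (tf12 p hpF hpW₁).2
    rw [← hfac]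
    exact M₂.two_of_three_comp i p hiW₂ hpW₂
  have w21 : ∀ ⦃X Y : C⦄ (f : X ⟶ Y), M₂.W f → M₁.W f := by
    intro X Y f hf
    obtain ⟨E, i, p, hiC, hiW, hpF, hfac⟩ := M₂.fact₁ f
    have hpW₂ : M₂.W p := M₂.two_of_three_right i p hiW (by rw [hfac]; exact hf)
    have hiW₁ : M₁.W i := t21 i hiC hiW
    have hpW₁ : M₁.W p := (tf21 p hpF hpW₂).2
    rw [← hfac]
    exact M₁.two_of_three_comp i p hiW₁ hpW₁
  -- fibrations agree
  have f12 : ∀ ⦃X Y : C⦄ (p : X ⟶ Y), M₁.Fib p → M₂.Fib p := by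
    intro X Y p hp
    obtain ⟨Z, i, q, hiC, hiW, hqF, hfac⟩ := M₂.fact₁ p
    have hiW₁ : M₁.W i := t21 i hiC hiW
    have hiC₁ : M₁.Cof i := by rw [hcof]; exact hiC
    haveI := M₁.lift i p hiC₁ hp (Or.inl hiW₁)
    have sq : CommSq (𝟙 X) i p q := ⟨by simp [hfac]⟩
    exact M₂.fib_retract p q
      ⟨i, sq.lift, 𝟙 Y, 𝟙 Y, sq.fac_left, by simp, by simp [hfac], by simp [sq.fac_right]⟩ hqF
  have f21 : ∀ ⦃X Y : C⦄ (p : X ⟶ Y), M₂.Fib p → M₁.Fib p := by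
    intro X Y p hp
    obtain ⟨Z, i, q, hiC, hiW, hqF, hfac⟩ := M₁.fact₁ p
    have hiW₂ : M₂.W i := t12 i hiC hiW
    have hiC₂ : M₂.Cof i := by rw [← hcof]; exact hiC
    haveI := M₂.lift i p hiC₂ hp (Or.inl hiW₂)
    have sq : CommSq (𝟙 X) i p q := ⟨by simp [hfac]⟩
    exact M₁.fib_retract p q
      ⟨i, sq.lift, 𝟙 Y, 𝟙 Y, sq.fac_left, by simp, by simp [hfac], by simp [sq.fac_right]⟩ hqF
  constructor
  · funext X Y f
    exact propext ⟨w12 f, w21 f⟩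
  · funext X Y p
    exact propext ⟨f12 p, f21 p⟩

end Stmt5
end

section
/- Let X be a regular simplicial set. Let Δ(X) be the category of simplices of X (objects: pairs (k, x) with x ∈ X_k; morphisms (k,x) → (ℓ,y): monotone maps g : [k] → [ℓ] with g^*y = x), and let Δ_nd(X) be the full subcategory on pairs (k,x) with x nondegenerate. Then the inclusion Δ_nd(X) → Δ(X) has a left adjoint ρ, where for an object (k,x) written uniquely (by the Eilenberg–Zilber lemma) as x = g^*y with g : [k] → [ℓ] a monotone surjection and y nondegenerate, ρ(k,x) = (ℓ,y), with unit morphism given by g. -/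
open CategoryTheory Simplicial

namespace Stmt7

/-- An element `(c, x)` of the category of simplices of `X` is degenerate if `x`
is the image of a lower-dimensional simplex under a surjective (degeneracy)
operator. -/
def IsDeg (X : SSet) (p : X.Elements) : Prop :=
  ∃ (d : SimplexCategory) (_ : d.len < p.1.unop.len) (g : p.1.unop ⟶ d),
    Function.Surjective g.toOrderHom ∧
    ∃ y : X.obj (Opposite.op d), X.map g.op y = p.2

/-- A simplicial set is regular if every face of a nondegenerate simplex is
nondegenerate. -/
def Regular (X : SSet) : Prop :=
  ∀ p : X.Elements, ¬IsDeg X p →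
    ∀ (c : SimplexCategory) (g : c ⟶ p.1.unop), Function.Injective g.toOrderHom →
      ¬IsDeg X ⟨Opposite.op c, X.map g.op p.2⟩

section EZ

open CategoryTheory.Limits SimplexCategory Opposite

lemma exists_sections {k d : SimplexCategory} (g : k ⟶ d)
    (hg : Function.Surjective g.toOrderHom) (i : Fin (k.len + 1)) :
    ∃ s s' : d ⟶ k, s ≫ g = 𝟙 d ∧ s' ≫ g = 𝟙 d ∧
      s.toOrderHom (g.toOrderHom i) ≤ i ∧ i ≤ s'.toOrderHom (g.toOrderHom i) := by
  classical
  set F := fun j : Fin (d.len + 1) => Finset.univ.filter (fun a => g.toOrderHom a = j) with hF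
  have hne : ∀ j, (F j).Nonempty := by
    intro j
    obtain ⟨a, ha⟩ := hg j
    exact ⟨a, by simp [hF, ha]⟩
  have hmem : ∀ j a, a ∈ F j ↔ g.toOrderHom a = j := by intro j a; simp [hF]
  have hmin_mono : Monotone (fun j => (F j).min' (hne j)) := by
    intro j j' hjj
    by_contra hlt
    push_neg at hlt
    have h1 : g.toOrderHom ((F j').min' (hne j')) = j' := (hmem _ _).1 ((F j').min'_mem _)
    have h2 : g.toOrderHom ((F j).min' (hne j)) = j := (hmem _ _).1 ((F j).min'_mem _)
    have := g.toOrderHom.monotone hlt.le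
    rw [h1, h2] at this
    exact absurd (le_antisymm this hjj) (by rintro rfl; exact absurd rfl hlt.ne')
  have hmax_mono : Monotone (fun j => (F j).max' (hne j)) := by
    intro j j' hjj
    by_contra hlt
    push_neg at hlt
    have h1 : g.toOrderHom ((F j').max' (hne j')) = j' := (hmem _ _).1 ((F j').max'_mem _)
    have h2 : g.toOrderHom ((F j).max' (hne j)) = j := (hmem _ _).1 ((F j).max'_mem _)
    have := g.toOrderHom.monotone hlt.le
    rw [h1, h2] at this
    exact absurd (le_antisymm this hjj) (by rintro rfl; exact absurd rfl hlt.ne')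
  refine ⟨SimplexCategory.Hom.mk ⟨_, hmin_mono⟩, SimplexCategory.Hom.mk ⟨_, hmax_mono⟩,
    ?_, ?_, ?_, ?_⟩
  · apply SimplexCategory.Hom.ext
    ext j
    exact congrArg Fin.val ((hmem _ _).1 ((F j).min'_mem (hne j)))
  · apply SimplexCategory.Hom.ext
    ext j
    exact congrArg Fin.val ((hmem _ _).1 ((F j).max'_mem (hne j)))
  · exact (F _).min'_le i ((hmem _ _).2 rfl)
  · exact (F _).le_max' i ((hmem _ _).2 rfl)


/-- If `α^* y'` is nondegenerate then `α` is injective. -/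
lemma injective_of_nondeg {X : SSet} {c c' : SimplexCategory} (α : c ⟶ c')
    (y' : X.obj (op c')) (h : ¬IsDeg X ⟨op c, X.map α.op y'⟩) :
    Function.Injective α.toOrderHom := by
  have fac : factorThruImage α ≫ image.ι α = α := image.fac α
  have hsurj : Function.Surjective (factorThruImage α).toOrderHom :=
    epi_iff_surjective.mp inferInstance
  have hlen : c.len ≤ (image α).len := by
    by_contra hlt
    push_neg at hlt
    refine h ⟨image α, hlt, factorThruImage α, hsurj, X.map (image.ι α).op y', ?_⟩
    rw [← FunctorToTypes.map_comp_apply, ← op_comp, fac]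
  have hlen' : (image α).len ≤ c.len := len_le_of_epi (factorThruImage α)
  have hbij : Function.Bijective (factorThruImage α).toOrderHom := by
    rw [Fintype.bijective_iff_surjective_and_card]
    exact ⟨hsurj, by simp [le_antisymm hlen hlen']⟩
  have hmono : Function.Injective (image.ι α).toOrderHom :=
    mono_iff_injective.mp inferInstance
  rw [← fac, comp_toOrderHom, OrderHom.comp_coe]
  exact Function.Injective.comp hmono hbij.injective

/-- Two surjections with `g^* y` nondegenerate agree on equal targets, given equal pullbacks. -/
lemma surj_eq {X : SSet} {k d : SimplexCategory} (g g' : k ⟶ d)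
    (hg : Function.Surjective g.toOrderHom)
    {y : X.obj (op d)} (hy : ¬IsDeg X ⟨op d, y⟩)
    (hxy : X.map g.op y = X.map g'.op y) : g' = g := by
  have Hsec : ∀ s : d ⟶ k, s ≫ g = 𝟙 d → s ≫ g' = 𝟙 d := by
    intro s hs
    have hval : X.map (s ≫ g').op y = y := by
      rw [op_comp, FunctorToTypes.map_comp_apply, ← hxy, ← FunctorToTypes.map_comp_apply,
        ← op_comp, hs, op_id, FunctorToTypes.map_id_apply]
    have hinj : Function.Injective (s ≫ g').toOrderHom := by
      apply injective_of_nondeg (s ≫ g') y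
      rw [hval]; exact hy
    have : Mono (s ≫ g') := mono_iff_injective.mpr hinj
    exact eq_id_of_mono (s ≫ g')
  apply SimplexCategory.Hom.ext
  ext i
  obtain ⟨s, s', hs, hs', hsle, hsge⟩ := exists_sections g hg i
  have h1 : g'.toOrderHom (s.toOrderHom (g.toOrderHom i)) = g.toOrderHom i := by
    have := Hsec s hs
    calc g'.toOrderHom (s.toOrderHom (g.toOrderHom i))
        = (s ≫ g').toOrderHom (g.toOrderHom i) := by rw [comp_toOrderHom]; rfl
      _ = g.toOrderHom i := by rw [this]; rfl
  have h2 : g'.toOrderHom (s'.toOrderHom (g.toOrderHom i)) = g.toOrderHom i := by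
    have := Hsec s' hs'
    calc g'.toOrderHom (s'.toOrderHom (g.toOrderHom i))
        = (s' ≫ g').toOrderHom (g.toOrderHom i) := by rw [comp_toOrderHom]; rfl
      _ = g.toOrderHom i := by rw [this]; rfl
  have hle : g'.toOrderHom i ≤ g.toOrderHom i := h2 ▸ g'.toOrderHom.monotone hsge
  have hge : g.toOrderHom i ≤ g'.toOrderHom i := h1 ▸ g'.toOrderHom.monotone hsle
  exact congrArg Fin.val (le_antisymm hle hge)

/-- Uniqueness part of the Eilenberg–Zilber lemma. -/
lemma EZ_unique {X : SSet} {k d d' : SimplexCategory} (g : k ⟶ d) (g' : k ⟶ d')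
    (hg : Function.Surjective g.toOrderHom) (hg' : Function.Surjective g'.toOrderHom)
    {y : X.obj (op d)} {y' : X.obj (op d')}
    (hy : ¬IsDeg X ⟨op d, y⟩) (hy' : ¬IsDeg X ⟨op d', y'⟩)
    (hxy : X.map g.op y = X.map g'.op y') :
    ∃ h : d = d', g' = g ≫ eqToHom h ∧ X.map (eqToHom h).op y' = y := by
  obtain ⟨s, _, hs, _, _, _⟩ := exists_sections g hg (Fin.mk 0 (Nat.succ_pos _))
  obtain ⟨s', _, hs', _, _, _⟩ := exists_sections g' hg' (Fin.mk 0 (Nat.succ_pos _))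
  have hα : X.map (s ≫ g').op y' = y := by
    rw [op_comp, FunctorToTypes.map_comp_apply, ← hxy, ← FunctorToTypes.map_comp_apply,
      ← op_comp, hs, op_id, FunctorToTypes.map_id_apply]
  have hβ : X.map (s' ≫ g).op y = y' := by
    rw [op_comp, FunctorToTypes.map_comp_apply, hxy, ← FunctorToTypes.map_comp_apply,
      ← op_comp, hs', op_id, FunctorToTypes.map_id_apply]
  have hαinj : Function.Injective (s ≫ g').toOrderHom := by
    apply injective_of_nondeg (s ≫ g') y'
    rw [hα]; exact hy
  have hβinj : Function.Injective (s' ≫ g).toOrderHom := by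
    apply injective_of_nondeg (s' ≫ g) y
    rw [hβ]; exact hy'
  have h : d = d' := by
    apply SimplexCategory.ext
    have h1 : d.len ≤ d'.len := @len_le_of_mono _ _ (s ≫ g') (mono_iff_injective.mpr hαinj)
    have h2 : d'.len ≤ d.len := @len_le_of_mono _ _ (s' ≫ g) (mono_iff_injective.mpr hβinj)
    omega
  subst h
  have : Mono (s ≫ g') := mono_iff_injective.mpr hαinj
  have hid : s ≫ g' = 𝟙 d := eq_id_of_mono (s ≫ g')
  have hyy : y' = y := by
    rw [← hα, hid, op_id, FunctorToTypes.map_id_apply]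
  subst hyy
  refine ⟨rfl, ?_, by simp⟩
  rw [eqToHom_refl, Category.comp_id]
  exact surj_eq g g' hg hy hxy

/-- Existence part of the Eilenberg–Zilber lemma. -/
lemma EZ_exists (X : SSet) (p : X.Elements) :
    ∃ (d : SimplexCategory) (g : p.1.unop ⟶ d) (y : X.obj (op d)),
      Function.Surjective g.toOrderHom ∧ ¬IsDeg X ⟨op d, y⟩ ∧ X.map g.op y = p.2 := by
  suffices H : ∀ (n : ℕ) (p : X.Elements), p.1.unop.len ≤ n →
      ∃ (d : SimplexCategory) (g : p.1.unop ⟶ d) (y : X.obj (op d)),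
        Function.Surjective g.toOrderHom ∧ ¬IsDeg X ⟨op d, y⟩ ∧ X.map g.op y = p.2 from
    H p.1.unop.len p le_rfl
  intro n
  induction n with
  | zero =>
    intro p hp
    refine ⟨p.1.unop, 𝟙 _, p.2, Function.surjective_id, ?_, by simp⟩
    rintro ⟨e, helt, -⟩

    simp only [unop_op] at helt
    omega
  | succ n IH =>
    intro p hp
    by_cases hdeg : IsDeg X p
    · obtain ⟨e, helt, g, hgsurj, y, hgy⟩ := hdeg
      obtain ⟨d, g', y', hsurj', hnd', hfac'⟩ := IH ⟨op e, y⟩ (by simpa using by omega)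
      refine ⟨d, g ≫ g', y', ?_, hnd', ?_⟩
      · rw [comp_toOrderHom, OrderHom.comp_coe]
        exact Function.Surjective.comp hsurj' hgsurj
      · rw [op_comp, FunctorToTypes.map_comp_apply]
        have : X.map g'.op y' = y := hfac'
        rw [this, hgy]
    · exact ⟨p.1.unop, 𝟙 _, p.2, Function.surjective_id, hdeg, by simp⟩


section Choice

variable (X : SSet)

noncomputable def dObj (p : X.Elements) : SimplexCategory := (EZ_exists X p).choose

noncomputable def dMap (p : X.Elements) : p.1.unop ⟶ dObj X p :=
  (EZ_exists X p).choose_spec.choose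

noncomputable def dPt (p : X.Elements) : X.obj (op (dObj X p)) :=
  (EZ_exists X p).choose_spec.choose_spec.choose

lemma dSurj (p : X.Elements) : Function.Surjective (dMap X p).toOrderHom :=
  (EZ_exists X p).choose_spec.choose_spec.choose_spec.1

lemma dNondeg (p : X.Elements) : ¬IsDeg X ⟨op (dObj X p), dPt X p⟩ :=
  (EZ_exists X p).choose_spec.choose_spec.choose_spec.2.1

lemma dFac (p : X.Elements) : X.map (dMap X p).op (dPt X p) = p.2 :=
  (EZ_exists X p).choose_spec.choose_spec.choose_spec.2.2

lemma dEpi (p : X.Elements) : Epi (dMap X p) :=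
  epi_iff_surjective.mpr (dSurj X p)

lemma lift_exists (hX : Regular X) (p : X.Elements) {ℓ : SimplexCategory}
    (z : X.obj (op ℓ)) (hz : ¬IsDeg X ⟨op ℓ, z⟩) (t : p.1.unop ⟶ ℓ)
    (ht : X.map t.op z = p.2) :
    ∃ w : dObj X p ⟶ ℓ, dMap X p ≫ w = t ∧ X.map w.op z = dPt X p := by
  have fac : factorThruImage t ≫ image.ι t = t := image.fac t
  have hesurj : Function.Surjective (factorThruImage t).toOrderHom :=
    epi_iff_surjective.mp inferInstance
  have hminj : Function.Injective (image.ι t).toOrderHom :=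
    mono_iff_injective.mp inferInstance
  have hznd : ¬IsDeg X ⟨op (image t), X.map (image.ι t).op z⟩ :=
    hX ⟨op ℓ, z⟩ hz (image t) (image.ι t) hminj
  have heq : X.map (factorThruImage t).op (X.map (image.ι t).op z)
      = X.map (dMap X p).op (dPt X p) := by
    rw [← FunctorToTypes.map_comp_apply, ← op_comp, fac, ht, dFac]
  obtain ⟨h, hgw, hyw⟩ := EZ_unique (factorThruImage t) (dMap X p) hesurj (dSurj X p)
    hznd (dNondeg X p) heq
  refine ⟨eqToHom h.symm ≫ image.ι t, ?_, ?_⟩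
  · rw [hgw, Category.assoc, ← Category.assoc (eqToHom h), eqToHom_trans, eqToHom_refl,
      Category.id_comp, fac]
  · rw [op_comp, FunctorToTypes.map_comp_apply, ← hyw, ← FunctorToTypes.map_comp_apply,
      ← op_comp, eqToHom_trans, eqToHom_refl, op_id, FunctorToTypes.map_id_apply]

end Choice

section Functor

variable (X : SSet)

/-- Constructor for morphisms in `(X.Elements)ᵒᵖ` from the underlying simplex
category morphism. -/
def homMk' {a b : (X.Elements)ᵒᵖ} (v : a.unop.1.unop ⟶ b.unop.1.unop)
    (hv : X.map v.op b.unop.2 = a.unop.2) : a ⟶ b :=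
  Quiver.Hom.op (⟨v.op, hv⟩ : b.unop ⟶ a.unop)

@[simp] lemma homMk'_unop2 {a b : (X.Elements)ᵒᵖ} (v : a.unop.1.unop ⟶ b.unop.1.unop)
    (hv : X.map v.op b.unop.2 = a.unop.2) : (homMk' X v hv).unop.1.unop = v := rfl

lemma ohom_ext {a b : (X.Elements)ᵒᵖ} {φ ψ : a ⟶ b}
    (h : φ.unop.1.unop = ψ.unop.1.unop) : φ = ψ :=
  Quiver.Hom.unop_inj (CategoryOfElements.ext X _ _ (Quiver.Hom.unop_inj h))

lemma unop2_comp {a b c : (X.Elements)ᵒᵖ} (f : a ⟶ b) (g : b ⟶ c) :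
    (f ≫ g).unop.1.unop = f.unop.1.unop ≫ g.unop.1.unop := rfl

lemma unop2_id (a : (X.Elements)ᵒᵖ) : (𝟙 a : a ⟶ a).unop.1.unop = 𝟙 a.unop.1.unop := rfl

lemma unop2_prop {a b : (X.Elements)ᵒᵖ} (f : a ⟶ b) :
    X.map (f.unop.1.unop).op b.unop.2 = a.unop.2 := f.unop.2

variable (hX : Regular X)

noncomputable def rmap {p q : (X.Elements)ᵒᵖ} (f : p ⟶ q) :
    dObj X p.unop ⟶ dObj X q.unop :=
  (lift_exists X hX p.unop (dPt X q.unop) (dNondeg X q.unop)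
    (f.unop.1.unop ≫ dMap X q.unop)
    (by rw [op_comp, FunctorToTypes.map_comp_apply, dFac]; exact unop2_prop X f)).choose

lemma rmap_fac {p q : (X.Elements)ᵒᵖ} (f : p ⟶ q) :
    dMap X p.unop ≫ rmap X hX f = f.unop.1.unop ≫ dMap X q.unop :=
  (lift_exists X hX p.unop (dPt X q.unop) (dNondeg X q.unop)
    (f.unop.1.unop ≫ dMap X q.unop)
    (by rw [op_comp, FunctorToTypes.map_comp_apply, dFac]; exact unop2_prop X f)).choose_spec.1

lemma rmap_pt {p q : (X.Elements)ᵒᵖ} (f : p ⟶ q) :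
    X.map (rmap X hX f).op (dPt X q.unop) = dPt X p.unop :=
  (lift_exists X hX p.unop (dPt X q.unop) (dNondeg X q.unop)
    (f.unop.1.unop ≫ dMap X q.unop)
    (by rw [op_comp, FunctorToTypes.map_comp_apply, dFac]; exact unop2_prop X f)).choose_spec.2

lemma rmap_eq {p q : (X.Elements)ᵒᵖ} (f : p ⟶ q) (v : dObj X p.unop ⟶ dObj X q.unop)
    (hv : dMap X p.unop ≫ v = f.unop.1.unop ≫ dMap X q.unop) : v = rmap X hX f := by
  have := dEpi X p.unop
  rw [← cancel_epi (dMap X p.unop), hv, rmap_fac]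

/-- The left adjoint `ρ`. -/
noncomputable def rho : (X.Elements)ᵒᵖ ⥤
    ObjectProperty.FullSubcategory (fun p : (X.Elements)ᵒᵖ => ¬IsDeg X p.unop) where
  obj p := ⟨op ⟨op (dObj X p.unop), dPt X p.unop⟩, dNondeg X p.unop⟩
  map {p q} f := ObjectProperty.homMk (homMk' X (rmap X hX f) (rmap_pt X hX f))
  map_id p := by
    apply InducedCategory.hom_ext
    apply ohom_ext
    have key : rmap X hX (𝟙 p) = 𝟙 (dObj X p.unop) := by
      refine (rmap_eq X hX (𝟙 p) _ ?_).symm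
      rw [Category.comp_id, unop2_id, Category.id_comp]
    exact key
  map_comp {p q r} f g := by
    apply InducedCategory.hom_ext
    apply ohom_ext
    have key : rmap X hX (f ≫ g) = rmap X hX f ≫ rmap X hX g := by
      refine (rmap_eq X hX (f ≫ g) _ ?_).symm
      rw [unop2_comp, ← Category.assoc, rmap_fac, Category.assoc, rmap_fac, ← Category.assoc]
    exact key

variable {X}

/-- "Precompose with the unit" map of the adjunction. -/
noncomputable def pushHom {p : (X.Elements)ᵒᵖ} {N : ObjectProperty.FullSubcategory (fun p : (X.Elements)ᵒᵖ => ¬IsDeg X p.unop)}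
    (w : (op ⟨op (dObj X p.unop), dPt X p.unop⟩ : (X.Elements)ᵒᵖ) ⟶ N.obj) :
    p ⟶ N.obj :=
  homMk' X (dMap X p.unop ≫ w.unop.1.unop)
    (by
      rw [op_comp, FunctorToTypes.map_comp_apply]
      have h1 : X.map (w.unop.1.unop).op N.obj.unop.2 = dPt X p.unop := unop2_prop X w
      rw [h1]
      exact dFac X p.unop)

lemma pushHom_unop2 {p : (X.Elements)ᵒᵖ} {N : ObjectProperty.FullSubcategory (fun p : (X.Elements)ᵒᵖ => ¬IsDeg X p.unop)}
    (w : (op ⟨op (dObj X p.unop), dPt X p.unop⟩ : (X.Elements)ᵒᵖ) ⟶ N.obj) :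
    (pushHom w).unop.1.unop = dMap X p.unop ≫ w.unop.1.unop := rfl

/-- Lift along the Eilenberg-Zilber decomposition. -/
noncomputable def liftHom {p : (X.Elements)ᵒᵖ} {N : ObjectProperty.FullSubcategory (fun p : (X.Elements)ᵒᵖ => ¬IsDeg X p.unop)}
    (t : p ⟶ N.obj) : dObj X p.unop ⟶ N.obj.unop.1.unop :=
  (lift_exists X hX p.unop N.obj.unop.2 N.property t.unop.1.unop (unop2_prop X t)).choose

lemma liftHom_fac {p : (X.Elements)ᵒᵖ} {N : ObjectProperty.FullSubcategory (fun p : (X.Elements)ᵒᵖ => ¬IsDeg X p.unop)} (t : p ⟶ N.obj) :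
    dMap X p.unop ≫ liftHom hX t = t.unop.1.unop :=
  (lift_exists X hX p.unop N.obj.unop.2 N.property t.unop.1.unop
    (unop2_prop X t)).choose_spec.1

lemma liftHom_pt {p : (X.Elements)ᵒᵖ} {N : ObjectProperty.FullSubcategory (fun p : (X.Elements)ᵒᵖ => ¬IsDeg X p.unop)} (t : p ⟶ N.obj) :
    X.map (liftHom hX t).op N.obj.unop.2 = dPt X p.unop :=
  (lift_exists X hX p.unop N.obj.unop.2 N.property t.unop.1.unop
    (unop2_prop X t)).choose_spec.2

/-- Inverse of `pushHom`. -/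
noncomputable def backHom {p : (X.Elements)ᵒᵖ} {N : ObjectProperty.FullSubcategory (fun p : (X.Elements)ᵒᵖ => ¬IsDeg X p.unop)}
    (t : p ⟶ N.obj) :
    (op ⟨op (dObj X p.unop), dPt X p.unop⟩ : (X.Elements)ᵒᵖ) ⟶ N.obj :=
  homMk' X (liftHom hX t) (liftHom_pt hX t)

lemma backHom_unop2 {p : (X.Elements)ᵒᵖ} {N : ObjectProperty.FullSubcategory (fun p : (X.Elements)ᵒᵖ => ¬IsDeg X p.unop)} (t : p ⟶ N.obj) :
    (backHom hX t).unop.1.unop = liftHom hX t := rfl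

variable (X)

/-- The adjunction. -/
noncomputable def adj : rho X hX ⊣
    ObjectProperty.ι (fun p : (X.Elements)ᵒᵖ => ¬IsDeg X p.unop) :=
  Adjunction.mkOfHomEquiv
    { homEquiv := fun p N =>
        { toFun := fun w => pushHom w.hom
          invFun := fun t => ObjectProperty.homMk (backHom hX t)
          left_inv := fun w' => by
            show ObjectProperty.homMk (backHom hX (pushHom w'.hom)) = w'
            apply InducedCategory.hom_ext
            apply ohom_ext
            show (backHom hX (pushHom w'.hom)).unop.1.unop = w'.hom.unop.1.unop
            rw [backHom_unop2]
            have h1 : dMap X p.unop ≫ liftHom hX (pushHom w'.hom) =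
                dMap X p.unop ≫ w'.hom.unop.1.unop := by
              rw [liftHom_fac]; rfl
            have := dEpi X p.unop
            exact (cancel_epi (dMap X p.unop)).mp h1
          right_inv := fun t => by
            apply ohom_ext
            show dMap X p.unop ≫ (backHom hX t).unop.1.unop = t.unop.1.unop
            rw [backHom_unop2, liftHom_fac]
          }
      homEquiv_naturality_left_symm := fun {p' p N} f g => by
        apply InducedCategory.hom_ext
        apply ohom_ext
        show (backHom hX (f ≫ g)).unop.1.unop = (homMk' X (rmap X hX f) (rmap_pt X hX f) ≫ backHom hX g).unop.1.unop
        rw [unop2_comp, backHom_unop2, backHom_unop2, homMk'_unop2]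
        have := dEpi X p'.unop
        rw [← cancel_epi (dMap X p'.unop), liftHom_fac, ← Category.assoc, rmap_fac,
          Category.assoc, liftHom_fac, ← unop2_comp]
      homEquiv_naturality_right := fun {p N N'} w h => by
        show pushHom ((w ≫ h).hom) = pushHom w.hom ≫ h.hom
        apply ohom_ext
        exact (Category.assoc _ _ _).symm }

end Functor

end EZ

/-- for a regular simplicial set `X`, the inclusion of the full
subcategory `Δ_nd(X)` of nondegenerate simplices into the category of simplices
`Δ(X) = (X.Elements)ᵒᵖ` admits a left adjoint `ρ`, whose unit at each simplex
`(k, x)` is given by the (surjective) degeneracy operator `g` of the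
Eilenberg–Zilber decomposition `x = g^* y` with `y` nondegenerate. -/
theorem nondegenerate_inclusion_has_left_adjoint (X : SSet) (hX : Regular X) :
    ∃ (ρ : (X.Elements)ᵒᵖ ⥤ ObjectProperty.FullSubcategory (fun p : (X.Elements)ᵒᵖ => ¬IsDeg X p.unop))
      (adj : ρ ⊣ ObjectProperty.ι (fun p : (X.Elements)ᵒᵖ => ¬IsDeg X p.unop)),
      ∀ p : (X.Elements)ᵒᵖ,
        Function.Surjective ((adj.unit.app p).unop.1.unop.toOrderHom) := by
  refine ⟨rho X hX, adj X hX, fun p => ?_⟩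
  have h : ((adj X hX).unit.app p).unop.1.unop = dMap X p.unop := by
    have h0 : ((adj X hX).unit.app p).unop.1.unop = dMap X p.unop ≫ 𝟙 _ := rfl
    rw [h0, Category.comp_id]
  rw [h]
  exact dSurj X p.unop

end Stmt7
end

section
/- In the category Fin_o, a non-identity morphism f : ([k],a,c) → ([ℓ],a',c') is sent to an identity morphism by the functor δ : Fin_o → Fin_* if and only if c = white, c' = black, ℓ = k − 1, a = k, f(x) = x for all x < k, and f(k) = a' = b for some b ∈ [k−1]. In particular, no non-identity black-to-black or white-to-white morphism of Fin_o is sent to an identity by δ. -/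
open CategoryTheory Simplicial

namespace ConfigCat

/-- Based maps `[k] → [l]` between the pointed sets `[k] = {0,…,k}` with
basepoint `0`. -/
@[ext]
structure FinStarHom (k l : ℕ) where
  toFun : Fin (k + 1) → Fin (l + 1)
  map_zero : toFun 0 = 0

/-- The objects of the category `Fin_*`: `k` stands for the pointed set
`[k] = {0,…,k}` with basepoint `0`. -/
def FinStar : Type := ℕ

/-- A natural number, regarded as an object of `Fin_*`. -/
def FinStar.mk (n : ℕ) : FinStar := n

/-- The underlying natural number of an object of `Fin_*`. -/
def FinStar.toNat (k : FinStar) : ℕ := k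

/-- The category `Fin_*` of pointed sets `[k]` and based maps. -/
instance : Category FinStar where
  Hom k l := FinStarHom k.toNat l.toNat
  id k := ⟨id, rfl⟩
  comp f g := ⟨g.toFun ∘ f.toFun, by simp [f.map_zero, g.map_zero]⟩
  id_comp f := by apply FinStarHom.ext; rfl
  comp_id f := by apply FinStarHom.ext; rfl
  assoc f g h := by apply FinStarHom.ext; rfl

/-- An object of `Fin_o`: a pointed set `[k]` with a distinguished non-basepoint
element `a` and a color (white or black), where white is only allowed when
`a = k`. -/
structure FinOObj where
  k : ℕ
  a : Fin (k + 1)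
  white : Bool
  a_ne_zero : a ≠ 0
  white_top : white = true → (a : ℕ) = k

/-- A morphism of `Fin_o`: a based map preserving the distinguished elements;
if the target is white then so is the source and the distinguished element of
the target has exactly one preimage, namely the distinguished element of the
source. -/
@[ext]
structure FinOHom (X Y : FinOObj) where
  f : FinStarHom X.k Y.k
  map_a : f.toFun X.a = Y.a
  white_cond : Y.white = true →
    X.white = true ∧ ∀ x, f.toFun x = Y.a → x = X.a

/-- The category `Fin_o`. -/
instance : Category FinOObj where
  Hom X Y := FinOHom X Y
  id X := ⟨⟨id, rfl⟩, rfl, fun h => ⟨h, fun _ hx => hx⟩⟩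
  comp {X Y Z} φ ψ :=
    { f := ⟨ψ.f.toFun ∘ φ.f.toFun, by
        simp [φ.f.map_zero, ψ.f.map_zero]⟩
      map_a := by
        show ψ.f.toFun (φ.f.toFun X.a) = Z.a
        rw [φ.map_a, ψ.map_a]
      white_cond := fun hZ => by
        obtain ⟨hY, hψ⟩ := ψ.white_cond hZ
        obtain ⟨hX, hφ⟩ := φ.white_cond hY
        exact ⟨hX, fun x hx => hφ x (hψ _ hx)⟩ }
  id_comp φ := by apply FinOHom.ext; apply FinStarHom.ext; rfl
  comp_id φ := by apply FinOHom.ext; apply FinStarHom.ext; rfl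
  assoc := by intros; apply FinOHom.ext; apply FinStarHom.ext; rfl
/-- The object part of the deletion functor `δ : Fin_o → Fin_*`: a black object
`([k],a)` goes to `[k]`, a white object `([k],k)` goes to `[k−1]`. -/
def deltaObj (X : FinOObj) : FinStar :=
  FinStar.mk (if X.white then X.k - 1 else X.k)

lemma deltaObj_le (X : FinOObj) : FinStar.toNat (deltaObj X) ≤ X.k := by
  show (if X.white then X.k - 1 else X.k) ≤ X.k
  split <;> omega

/-- The morphism part of the deletion functor `δ : Fin_o → Fin_*` (restriction;
white objects lose their distinguished top point). -/
def deltaMap {X Y : FinOObj} (φ : X ⟶ Y) :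
    FinStarHom (FinStar.toNat (deltaObj X)) (FinStar.toNat (deltaObj Y)) where
  toFun x :=
    ⟨min ((φ.f.toFun (Fin.castLE (Nat.succ_le_succ (deltaObj_le X)) x)) : ℕ)
        (FinStar.toNat (deltaObj Y)),
      Nat.lt_succ_of_le (min_le_right _ _)⟩
  map_zero := by
    apply Fin.ext
    have h0 : Fin.castLE (Nat.succ_le_succ (deltaObj_le X)) (0 : Fin _) =
        (0 : Fin (X.k + 1)) := by
      apply Fin.ext; simp
    show min ((φ.f.toFun _ : ℕ)) _ = _
    rw [h0, φ.f.map_zero]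
    simp

lemma deltaMap_no_trunc {X Y : FinOObj} (φ : X ⟶ Y)
    (x : Fin (FinStar.toNat (deltaObj X) + 1)) :
    ((φ.f.toFun (Fin.castLE (Nat.succ_le_succ (deltaObj_le X)) x)) : ℕ) ≤
      FinStar.toNat (deltaObj Y) := by
  by_cases hY : Y.white = true
  · obtain ⟨hX, huniq⟩ := φ.white_cond hY
    have hYa : (Y.a : ℕ) = Y.k := Y.white_top hY
    have hXa : (X.a : ℕ) = X.k := X.white_top hX
    have hk : 1 ≤ X.k := by
      rcases Nat.eq_zero_or_pos X.k with h0 | h1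
      · exfalso
        apply X.a_ne_zero
        apply Fin.ext
        have := X.a.isLt
        simp only [Fin.val_zero]
        omega
      · exact h1
    have hdX : FinStar.toNat (deltaObj X) = X.k - 1 := by
      show (if X.white then X.k - 1 else X.k) = X.k - 1
      rw [if_pos hX]
    have hne : φ.f.toFun (Fin.castLE (Nat.succ_le_succ (deltaObj_le X)) x) ≠ Y.a := by
      intro he
      have h3 := congrArg Fin.val (huniq _ he)
      rw [Fin.coe_castLE, hXa] at h3
      have hx : (x : ℕ) < FinStar.toNat (deltaObj X) + 1 := x.isLt
      omega
    have hlt := (φ.f.toFun (Fin.castLE (Nat.succ_le_succ (deltaObj_le X)) x)).isLt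
    have hne' : ((φ.f.toFun (Fin.castLE (Nat.succ_le_succ (deltaObj_le X)) x)) : ℕ) ≠ Y.k := by
      intro h4
      apply hne
      apply Fin.ext
      rw [h4, hYa]
    have hdY : FinStar.toNat (deltaObj Y) = Y.k - 1 := by
      show (if Y.white then Y.k - 1 else Y.k) = Y.k - 1
      rw [if_pos hY]
    omega
  · have hdY : FinStar.toNat (deltaObj Y) = Y.k := by
      show (if Y.white then Y.k - 1 else Y.k) = Y.k
      rw [if_neg hY]
    have hlt := (φ.f.toFun (Fin.castLE (Nat.succ_le_succ (deltaObj_le X)) x)).isLt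
    omega

/-- The deletion functor `δ : Fin_o → Fin_*`. -/
def delta : FinOObj ⥤ FinStar where
  obj := deltaObj
  map := deltaMap
  map_id X := by
    apply FinStarHom.ext
    funext x
    apply Fin.ext
    have hx : (x : ℕ) < FinStar.toNat (deltaObj X) + 1 := x.isLt
    show min ((Fin.castLE (Nat.succ_le_succ (deltaObj_le X)) x : Fin (X.k + 1)) : ℕ)
        (FinStar.toNat (deltaObj X)) = (x : ℕ)
    rw [Fin.coe_castLE]
    omega
  map_comp {X Y Z} φ ψ := by
    apply FinStarHom.ext
    funext x
    apply Fin.ext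
    have hA : Fin.castLE (Nat.succ_le_succ (deltaObj_le Y)) ((deltaMap φ).toFun x) =
        φ.f.toFun (Fin.castLE (Nat.succ_le_succ (deltaObj_le X)) x) := by
      apply Fin.ext
      rw [Fin.coe_castLE]
      exact min_eq_left (deltaMap_no_trunc φ x)
    show min ((ψ.f.toFun (φ.f.toFun (Fin.castLE (Nat.succ_le_succ (deltaObj_le X)) x))) : ℕ)
        (FinStar.toNat (deltaObj Z)) =
      min ((ψ.f.toFun (Fin.castLE (Nat.succ_le_succ (deltaObj_le Y)) ((deltaMap φ).toFun x))) : ℕ)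
        (FinStar.toNat (deltaObj Z))
    rw [hA]
end ConfigCat

/-- A simplex `x ∈ X_n` of a simplicial set is degenerate if it is the image of
a lower-dimensional simplex under a surjective (degeneracy) operator. -/
def IsDegenerate (X : SSet) {n : ℕ} (x : X _⦋n⦌) : Prop :=
  ∃ (m : ℕ) (_ : m < n) (g : (⦋n⦌ : SimplexCategory) ⟶ ⦋m⦌),
    Function.Surjective g.toOrderHom ∧ ∃ y : X _⦋m⦌, X.map g.op y = x

open ConfigCat CategoryTheory in
lemma finStar_hom_eq_eqToHom_iff {m m' : FinStar} (h : m = m') (f : m ⟶ m') :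
    f = eqToHom h ↔ ∀ x : Fin (FinStar.toNat m + 1), ((f.toFun x : ℕ) = (x : ℕ)) := by
  subst h
  rw [eqToHom_refl]
  constructor
  · rintro rfl x; rfl
  · intro hf
    apply FinStarHom.ext
    funext x
    exact Fin.ext (hf x)

open ConfigCat in
lemma finOObj_ext {X Y : FinOObj} (hk : X.k = Y.k) (ha : (X.a : ℕ) = (Y.a : ℕ))
    (hw : X.white = Y.white) : X = Y := by
  obtain ⟨k, a, w, h1, h2⟩ := X
  obtain ⟨k', a', w', h1', h2'⟩ := Y
  dsimp at hk ha hw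
  subst hk; subst hw
  have : a = a' := Fin.ext ha
  subst this
  rfl

open ConfigCat in
lemma white_k_pos (X : FinOObj) (hX : X.white = true) : 1 ≤ X.k := by
  have h1 := X.white_top hX
  have h2 := X.a_ne_zero
  have h3 := X.a.isLt
  rcases Nat.eq_zero_or_pos X.k with h | h
  · exact absurd (Fin.ext (by omega : (X.a : ℕ) = ((0 : Fin (X.k + 1)) : ℕ))) h2
  · exact h

open ConfigCat CategoryTheory in
lemma deltaMap_val {X Y : FinOObj} (φ : X ⟶ Y) (x : Fin (X.k + 1))
    (hx : (x : ℕ) ≤ FinStar.toNat (deltaObj X)) :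
    ((deltaMap φ).toFun ⟨(x : ℕ), Nat.lt_succ_of_le hx⟩ : ℕ) =
      min ((φ.f.toFun x : ℕ)) (FinStar.toNat (deltaObj Y)) := by
  show min ((φ.f.toFun (Fin.castLE (Nat.succ_le_succ (deltaObj_le X))
      ⟨(x : ℕ), Nat.lt_succ_of_le hx⟩) : ℕ)) (FinStar.toNat (deltaObj Y)) = _
  have hc : Fin.castLE (Nat.succ_le_succ (deltaObj_le X))
      (⟨(x : ℕ), Nat.lt_succ_of_le hx⟩ : Fin (FinStar.toNat (deltaObj X) + 1)) = x :=
    Fin.ext rfl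
  rw [hc]

open ConfigCat CategoryTheory in
lemma key_vals {X Y : FinOObj} (φ : X ⟶ Y) (h : delta.obj X = delta.obj Y)
    (hid : delta.map φ = eqToHom h) (x : Fin (X.k + 1))
    (hx : (x : ℕ) ≤ FinStar.toNat (deltaObj X)) :
    (φ.f.toFun x : ℕ) = (x : ℕ) := by
  have hf := (finStar_hom_eq_eqToHom_iff h (delta.map φ)).mp hid
    ⟨(x : ℕ), Nat.lt_succ_of_le hx⟩
  have h2 := deltaMap_val φ x hx
  have hc : Fin.castLE (Nat.succ_le_succ (deltaObj_le X))
      (⟨(x : ℕ), Nat.lt_succ_of_le hx⟩ : Fin (FinStar.toNat (deltaObj X) + 1)) = x :=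
    Fin.ext rfl
  have h3 := deltaMap_no_trunc φ ⟨(x : ℕ), Nat.lt_succ_of_le hx⟩
  rw [hc] at h3
  have h5 : ((deltaMap φ).toFun ⟨(x : ℕ), Nat.lt_succ_of_le hx⟩ : ℕ) = (x : ℕ) := hf
  rw [h2] at h5
  omega

open ConfigCat CategoryTheory in
/-- a non-identity morphism `f : ([k],a,c) → ([ℓ],a',c')` of
`Fin_o` is sent to an identity morphism by `δ` iff `c` is white, `c'` is black,
`ℓ = k − 1`, `a = k`, `f(x) = x` for all `x < k`, and `f(k) = a'`. In
particular, no non-identity black-to-black or white-to-white morphism is sent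
to an identity by `δ`. -/
theorem delta_map_eq_id_iff (X Y : FinOObj) (φ : X ⟶ Y)
    (hφ : ¬∃ h : X = Y, φ = eqToHom h) :
    ((∃ h : delta.obj X = delta.obj Y, delta.map φ = eqToHom h) ↔
      (X.white = true ∧ Y.white = false ∧ Y.k = X.k - 1 ∧ (X.a : ℕ) = X.k ∧
        (∀ x : Fin (X.k + 1), (x : ℕ) < X.k → ((φ.f.toFun x : ℕ) = (x : ℕ))) ∧
        (φ.f.toFun X.a = Y.a))) ∧
    (X.white = Y.white → ¬∃ h : delta.obj X = delta.obj Y, delta.map φ = eqToHom h) := by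
  have hdX : FinStar.toNat (deltaObj X) = if X.white then X.k - 1 else X.k := rfl
  have hdY : FinStar.toNat (deltaObj Y) = if Y.white then Y.k - 1 else Y.k := rfl
  have main : (∃ h : delta.obj X = delta.obj Y, delta.map φ = eqToHom h) ↔
      (X.white = true ∧ Y.white = false ∧ Y.k = X.k - 1 ∧ (X.a : ℕ) = X.k ∧
        (∀ x : Fin (X.k + 1), (x : ℕ) < X.k → ((φ.f.toFun x : ℕ) = (x : ℕ))) ∧
        (φ.f.toFun X.a = Y.a)) := by
    constructor
    · rintro ⟨h, hid⟩
      have hnat : (if X.white then X.k - 1 else X.k) = (if Y.white then Y.k - 1 else Y.k) := h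
      have hkey := key_vals φ h hid
      have hmapa : (φ.f.toFun X.a : ℕ) = (Y.a : ℕ) := congrArg Fin.val φ.map_a
      cases hXw : X.white <;> cases hYw : Y.white <;>
        simp only [hXw, hYw, if_true, if_false, Bool.false_eq_true, ite_true, ite_false] at hnat hdX hdY
      · -- black → black
        exfalso; apply hφ
        have hXY : X = Y := by
          apply finOObj_ext hnat _ (hXw.trans hYw.symm)
          rw [← hmapa, hkey X.a (by omega)]
        refine ⟨hXY, ?_⟩
        subst hXY
        rw [eqToHom_refl]
        apply FinOHom.ext; apply FinStarHom.ext
        funext x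
        exact Fin.ext (hkey x (by omega))
      · -- black → white: impossible
        exact absurd (φ.white_cond hYw).1 (by simp [hXw])
      · -- white → black: this is the content
        have hXk := white_k_pos X hXw
        have hXa := X.white_top hXw
        refine ⟨rfl, rfl, by omega, hXa, ?_, φ.map_a⟩
        intro x hx
        exact hkey x (by omega)
      · -- white → white
        exfalso; apply hφ
        have hXk := white_k_pos X hXw
        have hYk := white_k_pos Y hYw
        have hkk : X.k = Y.k := by omega
        have hXa := X.white_top hXw
        have hYa := Y.white_top hYw
        have hXY : X = Y := by
          apply finOObj_ext hkk _ (hXw.trans hYw.symm)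
          omega
        refine ⟨hXY, ?_⟩
        subst hXY
        rw [eqToHom_refl]
        apply FinOHom.ext; apply FinStarHom.ext
        funext x
        apply Fin.ext
        show (φ.f.toFun x : ℕ) = (x : ℕ)
        rcases Nat.lt_or_ge (x : ℕ) X.k with hx | hx
        · exact hkey x (by omega)
        · have hxa : x = X.a := Fin.ext (by have := x.isLt; omega)
          rw [hxa]
          exact hmapa
    · rintro ⟨hXw, hYw, hk, hXa, hf, -⟩
      have hXk := white_k_pos X hXw
      have h : delta.obj X = delta.obj Y := by
        show (if X.white then X.k - 1 else X.k) = (if Y.white then Y.k - 1 else Y.k)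
        rw [hXw, hYw]; simp; omega
      refine ⟨h, ?_⟩
      rw [finStar_hom_eq_eqToHom_iff h (delta.map φ)]
      intro x
      have hx : (x : ℕ) ≤ FinStar.toNat (deltaObj X) := Nat.lt_succ_iff.mp x.isLt
      show min ((φ.f.toFun (Fin.castLE (Nat.succ_le_succ (deltaObj_le X)) x) : ℕ))
          (FinStar.toNat (deltaObj Y)) = (x : ℕ)
      have hxlt : (x : ℕ) < X.k := by
        rw [hdX, hXw] at hx
        simp at hx
        omega
      have h5 : (φ.f.toFun (Fin.castLE (Nat.succ_le_succ (deltaObj_le X)) x) : ℕ) = (x : ℕ) := by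
        have := hf (Fin.castLE (Nat.succ_le_succ (deltaObj_le X)) x) (by exact hxlt)
        change _ = (x : ℕ) at this
        exact this
      rw [h5]
      have : FinStar.toNat (deltaObj Y) = Y.k := by rw [hdY, hYw]; simp
      omega
  refine ⟨main, fun hw hex => ?_⟩
  obtain ⟨h1, h2, -⟩ := main.mp hex
  rw [hw, h2] at h1
  exact absurd h1 (by simp)
end

section
/- The functor α : Fin_* → Fin_o defined on objects by α([k]) = ([k+1], k+1, white), which identifies Fin_* with the full subcategory of white objects of Fin_o, is left adjoint to the functor δ : Fin_o → Fin_*; moreover δ ∘ α = id on Fin_*. -/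
open CategoryTheory Simplicial

namespace ConfigCat

/-- Extension of a based map `[k] → [ℓ]` to a based map `[k+1] → [ℓ+1]` sending
`k+1` to `ℓ+1` and agreeing with `f` elsewhere. -/
def alphaFun {k l : ℕ} (f : FinStarHom k l) (x : Fin (k + 1 + 1)) : Fin (l + 1 + 1) :=
  if _ : (x : ℕ) = k + 1 then Fin.last (l + 1)
  else (f.toFun ⟨(x : ℕ), by have h1 : (x : ℕ) < k + 1 + 1 := x.isLt; omega⟩).castSucc

/-- The functor `α : Fin_* → Fin_o`, `[k] ↦ ([k+1], k+1, white)`, extending a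
based map `[k] → [ℓ]` to `[k+1] → [ℓ+1]` by sending `k+1` to `ℓ+1`. -/
def alpha : FinStar ⥤ FinOObj where
  obj k :=
    { k := FinStar.toNat k + 1
      a := Fin.last (FinStar.toNat k + 1)
      white := true
      a_ne_zero := by
        intro h
        exact (Nat.succ_ne_zero _) ((congrArg Fin.val h).trans rfl)
      white_top := fun _ => rfl }
  map {k l} f :=
    { f :=
        { toFun := alphaFun f
          map_zero := by
            unfold alphaFun
            rw [dif_neg (by simp)]
            simp [f.map_zero] }
      map_a := by
        show alphaFun f (Fin.last (FinStar.toNat k + 1)) = Fin.last (FinStar.toNat l + 1)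
        unfold alphaFun
        exact dif_pos rfl
      white_cond := fun _ => by
        refine ⟨rfl, fun x hx => ?_⟩
        by_cases h : (x : ℕ) = FinStar.toNat k + 1
        · exact Fin.ext (h.trans (Fin.val_last _).symm)
        · exfalso
          replace hx : alphaFun f x = Fin.last (FinStar.toNat l + 1) := hx
          unfold alphaFun at hx
          rw [dif_neg h] at hx
          have h2 := congrArg Fin.val hx
          rw [Fin.coe_castSucc, Fin.val_last] at h2
          exact absurd h2 (Nat.ne_of_lt (Fin.is_lt _)) }
  map_id k := by
    apply FinOHom.ext
    apply FinStarHom.ext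
    funext x
    show alphaFun (𝟙 k) x = x
    unfold alphaFun
    split
    · next h =>
        apply Fin.ext
        rw [Fin.val_last, h]
    · next h =>
        apply Fin.ext
        rw [Fin.coe_castSucc]
        rfl
  map_comp {k l m} f g := by
    apply FinOHom.ext
    apply FinStarHom.ext
    funext x
    show alphaFun (f ≫ g) x = alphaFun g (alphaFun f x)
    by_cases h : (x : ℕ) = FinStar.toNat k + 1
    case pos =>
      have hfx : alphaFun f x = Fin.last (FinStar.toNat l + 1) := by
        unfold alphaFun
        split
        · rfl
        · next h2 => exact absurd h h2
      rw [hfx]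
      have h2 : alphaFun g (Fin.last (FinStar.toNat l + 1)) =
          Fin.last (FinStar.toNat m + 1) := by
        unfold alphaFun
        split
        · rfl
        · next h3 => exact absurd (Fin.val_last _) h3
      rw [h2]
      unfold alphaFun
      split
      · rfl
      · next h3 => exact absurd h h3
    case neg =>
      have hlt : (x : ℕ) < FinStar.toNat k + 1 := by
        have h1 : (x : ℕ) < FinStar.toNat k + 1 + 1 := x.isLt
        omega
      have hfx : alphaFun f x = Fin.castSucc (f.toFun ⟨(x : ℕ), hlt⟩) := by
        unfold alphaFun
        split
        · next h2 => exact absurd h2 h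
        · rfl
      rw [hfx]
      have h4 : alphaFun g (Fin.castSucc (f.toFun ⟨(x : ℕ), hlt⟩)) =
          Fin.castSucc (g.toFun (f.toFun ⟨(x : ℕ), hlt⟩)) := by
        unfold alphaFun
        split
        · next h3 =>
            exfalso
            rw [Fin.coe_castSucc] at h3
            exact absurd h3 (Nat.ne_of_lt (Fin.is_lt _))
        · next h3 => congr 1
      rw [h4]
      have h5 : alphaFun (f ≫ g) x = Fin.castSucc ((f ≫ g).toFun ⟨(x : ℕ), hlt⟩) := by
        unfold alphaFun
        split
        · next h2 => exact absurd h2 h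
        · rfl
      rw [h5]
      rfl

end ConfigCat


namespace ConfigCat

open CategoryTheory

lemma alpha_k (k : FinStar) : (alpha.obj k).k = FinStar.toNat k + 1 := rfl
lemma alpha_a (k : FinStar) : ((alpha.obj k).a : ℕ) = FinStar.toNat k + 1 := rfl
lemma deltaAlpha_toNat (k : FinStar) :
    FinStar.toNat (delta.obj (alpha.obj k)) = FinStar.toNat k := rfl
lemma deltaAlpha_toNat' (k : FinStar) :
    FinStar.toNat (deltaObj (alpha.obj k)) = FinStar.toNat k := rfl
lemma deltaObj_toNat (Y : FinOObj) :
    FinStar.toNat (delta.obj Y) = FinStar.toNat (deltaObj Y) := rfl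

/-- The function underlying `fromDelta`. -/
def fromDeltaFun {k : FinStar} {Y : FinOObj} (g : k ⟶ delta.obj Y)
    (x : Fin (FinStar.toNat k + 1 + 1)) : Fin (Y.k + 1) :=
  if _ : (x : ℕ) = FinStar.toNat k + 1 then Y.a
  else Fin.castLE (Nat.succ_le_succ (deltaObj_le Y))
    (g.toFun ⟨(x : ℕ), by have h := x.isLt; omega⟩)

/-- Backward direction of the hom-equivalence for `α ⊣ δ`. -/
def fromDelta {k : FinStar} {Y : FinOObj} (g : k ⟶ delta.obj Y) :
    alpha.obj k ⟶ Y where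
  f :=
    { toFun := fromDeltaFun g
      map_zero := by
        show fromDeltaFun g 0 = 0
        unfold fromDeltaFun
        rw [dif_neg (by simp)]
        apply Fin.ext
        have h0 : (⟨(((0 : Fin (FinStar.toNat k + 1 + 1))) : ℕ), by simp⟩ :
            Fin (FinStar.toNat k + 1)) = 0 := by apply Fin.ext; rfl
        rw [h0, g.map_zero]
        rfl }
  map_a := by
    show fromDeltaFun g (Fin.last (FinStar.toNat k + 1)) = Y.a
    unfold fromDeltaFun
    exact dif_pos rfl
  white_cond := fun hY => by
    refine ⟨rfl, fun x hx => ?_⟩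
    show x = Fin.last _
    by_contra hne
    have hxlt : (x : ℕ) ≠ FinStar.toNat k + 1 := fun h =>
      hne (Fin.ext (h.trans (Fin.val_last _).symm))
    replace hx : fromDeltaFun g x = Y.a := hx
    unfold fromDeltaFun at hx
    rw [dif_neg hxlt] at hx
    have h1 := congrArg Fin.val hx
    erw [Fin.coe_castLE] at h1
    have hYa : (Y.a : ℕ) = Y.k := Y.white_top hY
    have hd : FinStar.toNat (deltaObj Y) = Y.k - 1 := by
      show (if Y.white then Y.k - 1 else Y.k) = Y.k - 1
      rw [if_pos hY]
    have h2 : (Y.a : ℕ) ≤ FinStar.toNat (deltaObj Y) := by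
      erw [← hx, Fin.coe_castLE]
      exact Nat.lt_succ_iff.mp (g.toFun _).isLt
    have hk : 1 ≤ Y.k := by
      rcases Nat.eq_zero_or_pos Y.k with h0 | h1'
      · exfalso
        apply Y.a_ne_zero
        apply Fin.ext
        have := Y.a.isLt
        simp only [Fin.val_zero]
        omega
      · exact h1'
    omega

/-- The hom-equivalence for `α ⊣ δ`. -/
def adjHomEquiv (k : FinStar) (Y : FinOObj) :
    (alpha.obj k ⟶ Y) ≃ (k ⟶ delta.obj Y) where
  toFun φ := delta.map φ
  invFun := fromDelta
  left_inv φ := by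
    apply FinOHom.ext
    apply FinStarHom.ext
    funext x
    show fromDeltaFun (delta.map φ) x = φ.f.toFun x
    unfold fromDeltaFun
    by_cases h : (x : ℕ) = FinStar.toNat (delta.obj (alpha.obj k)) + 1
    · rw [dif_pos h]
      have hx : x = Fin.last (FinStar.toNat k + 1) := Fin.ext h
      rw [hx]
      exact φ.map_a.symm
    · rw [dif_neg h]
      apply Fin.ext
      erw [Fin.coe_castLE]
      set x' : Fin (FinStar.toNat (deltaObj (alpha.obj k)) + 1) :=
        ⟨(x : ℕ), by
          have h9 : (x : ℕ) < FinStar.toNat k + 1 + 1 := x.isLt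
          have h8 := deltaAlpha_toNat' k
          have h7 := deltaAlpha_toNat k
          omega⟩ with hx'
      have hc : Fin.castLE (Nat.succ_le_succ (deltaObj_le (alpha.obj k))) x' = x :=
        Fin.ext rfl
      have hnt := deltaMap_no_trunc φ x'
      show min ((φ.f.toFun (Fin.castLE (Nat.succ_le_succ (deltaObj_le (alpha.obj k))) x')) : ℕ)
        (FinStar.toNat (deltaObj Y)) = ((φ.f.toFun x) : ℕ)
      rw [hc] at hnt ⊢
      have hd2 : FinStar.toNat (deltaObj Y) = FinStar.toNat (delta.obj Y) := rfl
      omega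
  right_inv g := by
    apply FinStarHom.ext
    funext x
    apply Fin.ext
    have hx : (x : ℕ) < FinStar.toNat k + 1 := x.isLt
    show min (((fromDelta g).f.toFun
        (Fin.castLE (Nat.succ_le_succ (deltaObj_le (alpha.obj k))) x)) : ℕ)
      (FinStar.toNat (deltaObj Y)) = (g.toFun x : ℕ)
    have h1 : ((fromDelta g).f.toFun
        (Fin.castLE (Nat.succ_le_succ (deltaObj_le (alpha.obj k))) x)) =
        Fin.castLE (Nat.succ_le_succ (deltaObj_le Y)) (g.toFun x) := by
      show fromDeltaFun g (Fin.castLE (Nat.succ_le_succ (deltaObj_le (alpha.obj k))) x) = _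
      unfold fromDeltaFun
      rw [dif_neg (by
        erw [Fin.coe_castLE]
        have h8 := deltaAlpha_toNat' k
        omega)]
      congr 1
    erw [h1, Fin.coe_castLE]
    have h7 : ((g.toFun x) : ℕ) < FinStar.toNat (delta.obj Y) + 1 := (g.toFun x).isLt
    have h6 := deltaObj_toNat Y
    omega

/-- The adjunction `α ⊣ δ`. -/
def adj : alpha ⊣ delta :=
  Adjunction.mkOfHomEquiv
    { homEquiv := adjHomEquiv
      homEquiv_naturality_left_symm := by
        intro k k' Y f g
        apply FinOHom.ext
        apply FinStarHom.ext
        funext x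
        show fromDeltaFun (f ≫ g) x = fromDeltaFun g (alphaFun f x)
        unfold fromDeltaFun
        by_cases h : (x : ℕ) = FinStar.toNat k + 1
        · rw [dif_pos h]
          have h2 : alphaFun f x = Fin.last (FinStar.toNat k' + 1) := by
            unfold alphaFun
            rw [dif_pos h]
          rw [h2, dif_pos (Fin.val_last _)]
        · rw [dif_neg h]
          have hlt : (x : ℕ) < FinStar.toNat k + 1 := by
            have h9 : (x : ℕ) < FinStar.toNat k + 1 + 1 := x.isLt
            omega
          have h2 : alphaFun f x = Fin.castSucc (f.toFun ⟨(x : ℕ), hlt⟩) := by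
            unfold alphaFun
            rw [dif_neg h]
          rw [h2, dif_neg (by
            rw [Fin.coe_castSucc]
            have h9 : ((f.toFun ⟨(x : ℕ), hlt⟩) : ℕ) < FinStar.toNat k' + 1 := (f.toFun _).isLt
            omega)]
          congr 1
      homEquiv_naturality_right := by
        intro k Y Y' φ ψ
        exact delta.map_comp φ ψ }

lemma alpha_comp_delta : alpha ⋙ delta = 𝟭 FinStar := by
  apply CategoryTheory.Functor.ext
  · intro k l f
    erw [eqToHom_refl, eqToHom_refl, Category.comp_id, Category.id_comp]
    apply FinStarHom.ext
    funext x
    apply Fin.ext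
    have hx : (x : ℕ) < FinStar.toNat k + 1 := x.isLt
    show min ((alphaFun f (Fin.castLE (Nat.succ_le_succ (deltaObj_le (alpha.obj k))) x)) : ℕ)
        (FinStar.toNat (deltaObj (alpha.obj l))) = (f.toFun x : ℕ)
    have h2 : alphaFun f (Fin.castLE (Nat.succ_le_succ (deltaObj_le (alpha.obj k))) x) =
        Fin.castSucc (f.toFun ⟨(x : ℕ), hx⟩) := by
      unfold alphaFun
      rw [dif_neg (by
        erw [Fin.coe_castLE]
        have h8 := deltaAlpha_toNat' k
        omega)]
      exact congrArg Fin.castSucc (congrArg f.toFun (Fin.ext rfl))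
    rw [h2, Fin.coe_castSucc]
    have hd : FinStar.toNat (deltaObj (alpha.obj l)) = FinStar.toNat l := rfl
    have h3 : (⟨(x : ℕ), hx⟩ : Fin (FinStar.toNat k + 1)) = x := Fin.ext rfl
    rw [h3]
    have h9 : ((f.toFun x) : ℕ) < FinStar.toNat l + 1 := (f.toFun x).isLt
    omega
  · intro k
    rfl

lemma alpha_full : alpha.Full := by
  constructor
  intro k l φ
  have hwc := φ.white_cond rfl
  refine ⟨{ toFun := fun x => ⟨(φ.f.toFun (Fin.castSucc x) : ℕ), ?_⟩
            map_zero := ?_ }, ?_⟩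
  · have h1 : (φ.f.toFun (Fin.castSucc x) : ℕ) < FinStar.toNat l + 1 + 1 :=
      (φ.f.toFun (Fin.castSucc x)).isLt
    have h2 : (φ.f.toFun (Fin.castSucc x) : ℕ) ≠ FinStar.toNat l + 1 := by
      intro he
      have h3 := hwc.2 (Fin.castSucc x) (Fin.ext he)
      have h4 := congrArg Fin.val h3
      erw [Fin.coe_castSucc] at h4
      have h5 := alpha_a k
      have h9 : (x : ℕ) < FinStar.toNat k + 1 := x.isLt
      omega
    omega
  · apply Fin.ext
    have h0 : Fin.castSucc (0 : Fin (FinStar.toNat k + 1)) =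
        (0 : Fin (FinStar.toNat k + 1 + 1)) := Fin.ext rfl
    show (φ.f.toFun (Fin.castSucc (0 : Fin (FinStar.toNat k + 1))) : ℕ) = 0
    erw [h0, φ.f.map_zero]
    rfl
  · apply FinOHom.ext
    apply FinStarHom.ext
    funext x
    show alphaFun _ x = φ.f.toFun x
    unfold alphaFun
    by_cases h : (x : ℕ) = FinStar.toNat k + 1
    · rw [dif_pos h]
      have hx : x = Fin.last (FinStar.toNat k + 1) := Fin.ext h
      rw [hx]
      exact φ.map_a.symm
    · rw [dif_neg h]
      apply Fin.ext
      rfl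

lemma alpha_faithful : alpha.Faithful := by
  constructor
  intro k l f g h
  apply FinStarHom.ext
  funext x
  have hx : ((Fin.castSucc x : Fin (FinStar.toNat k + 1 + 1)) : ℕ) ≠ FinStar.toNat k + 1 := by
    rw [Fin.coe_castSucc]
    exact Nat.ne_of_lt x.isLt
  have hf : alphaFun f (Fin.castSucc x) = Fin.castSucc (f.toFun x) := by
    unfold alphaFun
    rw [dif_neg hx]
    exact congrArg Fin.castSucc (congrArg f.toFun (Fin.ext (Fin.coe_castSucc x)))
  have hg : alphaFun g (Fin.castSucc x) = Fin.castSucc (g.toFun x) := by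
    unfold alphaFun
    rw [dif_neg hx]
    exact congrArg Fin.castSucc (congrArg g.toFun (Fin.ext (Fin.coe_castSucc x)))
  have h2 : alphaFun f (Fin.castSucc x) = alphaFun g (Fin.castSucc x) := by
    have h3 := congrArg (fun ψ => FinOHom.f ψ) h
    have h4 := congrArg (fun ψ => FinStarHom.toFun ψ) h3
    exact congrFun h4 _
  rw [hf, hg] at h2
  exact Fin.castSucc_injective _ h2

end ConfigCat

open ConfigCat CategoryTheory in
/-- the functor `α : Fin_* → Fin_o`, `[k] ↦ ([k+1], k+1, white)`,
which identifies `Fin_*` with the full subcategory of white objects of `Fin_o`,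
is left adjoint to the deletion functor `δ : Fin_o → Fin_*`, and `δ ∘ α` is the
identity functor of `Fin_*`. -/
theorem alpha_left_adjoint_to_delta :
    Nonempty (alpha ⊣ delta) ∧ alpha ⋙ delta = 𝟭 FinStar ∧
    alpha.Full ∧ alpha.Faithful ∧ ∀ k : FinStar, (alpha.obj k).white = true := by
  exact ⟨⟨adj⟩, alpha_comp_delta, alpha_full, alpha_faithful, fun _ => rfl⟩
end

section
/- Let C be a finite poset with full sub-posets A and B such that A ∪ B = C, B is upward closed in C, A is downward closed in C, for all a ∈ A and b ∈ B with a ≤ b there exists c ∈ A ∩ B with a ≤ c ≤ b, and A ∩ B is linearly ordered. For a nondegenerate n-simplex σ = (x₀ > x₁ > ⋯ > x_n) of the nerve NC that lies neither in NA nor in NB, define w(σ) to be the largest index such that x₀, …, x_{w(σ)} ∈ B (so 0 < w(σ) < n, x₀ ∈ B∖A, x_n ∈ A∖B, and x_{w(σ)+1},…,x_n ∈ A∖B). Say σ is of type 1 if x_{w(σ)} ∈ A ∩ B and x_{w(σ)} is the minimal element of {c ∈ A ∩ B : x_{w(σ)−1} ≥ c ≥ x_{w(σ)+1}}; otherwise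 σ is of type 2. Then the assignment σ ↦ d_{w(σ)}σ (deleting the vertex x_{w(σ)}) is a bijection from the set of type-1 simplices onto the set of type-2 simplices (both ranging over nondegenerate simplices of NC not in NA ∪ NB). -/
namespace Stmt17

variable {C : Type} [PartialOrder C]

/-- A nondegenerate simplex of the nerve of a poset: a strictly decreasing
chain `x₀ > x₁ > ⋯ > x_n`. -/
abbrev Simp (C : Type) [PartialOrder C] : Type :=
  Σ n : ℕ, {x : Fin (n + 1) → C // StrictAnti x}

/-- Evaluation of a simplex at an index (indices ≥ n are reduced mod n+1; all
uses below are in range). -/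
def evalS (σ : Simp C) (i : ℕ) : C :=
  σ.2.1 ⟨i % (σ.1 + 1), Nat.mod_lt _ (Nat.succ_pos _)⟩

/-- The simplex lies neither in the nerve of `A` nor in the nerve of `B`. -/
def Good (A B : Set C) (σ : Simp C) : Prop :=
  (¬∀ i, σ.2.1 i ∈ A) ∧ (¬∀ i, σ.2.1 i ∈ B)

/-- `w` is the cut index of `σ`: the vertices `x₀,…,x_w` lie in `B` and the
later ones do not. -/
def IsW (B : Set C) (σ : Simp C) (w : ℕ) : Prop :=
  ∀ j : Fin (σ.1 + 1), σ.2.1 j ∈ B ↔ (j : ℕ) ≤ w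

/-- `σ` is of type 1: at its cut index `w`, the vertex `x_w` lies in `A ∩ B` and
is the least element of `{c ∈ A ∩ B : x_{w−1} ≥ c ≥ x_{w+1}}`. -/
def Type1 (A B : Set C) (σ : Simp C) : Prop :=
  ∃ w : ℕ, 0 < w ∧ w < σ.1 ∧ IsW B σ w ∧
    evalS σ w ∈ A ∧ evalS σ w ∈ B ∧
    IsLeast {c : C | c ∈ A ∧ c ∈ B ∧ c ≤ evalS σ (w - 1) ∧ evalS σ (w + 1) ≤ c} (evalS σ w)

-- basic lemmas

lemma evalS_def (σ : Simp C) (i : ℕ) (hi : i ≤ σ.1) :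
    evalS σ i = σ.2.1 ⟨i, by omega⟩ := by
  unfold evalS
  have h : i % (σ.1 + 1) = i := Nat.mod_eq_of_lt (by omega)
  have h2 : (⟨i % (σ.1 + 1), Nat.mod_lt _ (Nat.succ_pos _)⟩ : Fin (σ.1 + 1)) = ⟨i, by omega⟩ :=
    Fin.ext (by simpa using h)
  rw [h2]

lemma evalS_fin (σ : Simp C) (j : Fin (σ.1 + 1)) : σ.2.1 j = evalS σ (j : ℕ) := by
  rw [evalS_def σ (j : ℕ) (by omega)]

lemma evalS_lt (σ : Simp C) {i j : ℕ} (hj : j ≤ σ.1) (hij : i < j) :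
    evalS σ j < evalS σ i := by
  rw [evalS_def σ i (by omega), evalS_def σ j hj]
  exact σ.2.2 (show (⟨i, by omega⟩ : Fin (σ.1+1)) < ⟨j, by omega⟩ from hij)

lemma evalS_le (σ : Simp C) {i j : ℕ} (hj : j ≤ σ.1) (hij : i ≤ j) :
    evalS σ j ≤ evalS σ i := by
  rcases eq_or_lt_of_le hij with rfl | h
  · exact le_rfl
  · exact (evalS_lt σ hj h).le

lemma Simp.ext {σ τ : Simp C} (h1 : σ.1 = τ.1)
    (h2 : ∀ i : ℕ, i ≤ σ.1 → evalS σ i = evalS τ i) : σ = τ := by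
  obtain ⟨n, x, hx⟩ := σ; obtain ⟨m, y, hy⟩ := τ
  dsimp at h1; subst h1
  refine congrArg (Sigma.mk n) ?_
  apply Subtype.ext; funext i
  have hle : (i : ℕ) ≤ n := Nat.lt_succ_iff.mp i.isLt
  have := h2 (i : ℕ) hle
  rw [evalS_def _ _ hle, evalS_def _ _ hle] at this
  simpa using this


/-- delete vertex `w` -/
def delAt (σ : Simp C) (w : ℕ) : Simp C :=
  ⟨σ.1 - 1, ⟨fun i => evalS σ (if (i : ℕ) < w then (i : ℕ) else (i : ℕ) + 1), by
    intro i j hij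
    have hij' : (i : ℕ) < (j : ℕ) := hij
    have hj : (j : ℕ) < σ.1 - 1 + 1 := j.isLt
    have hσ : 2 ≤ σ.1 := by omega
    by_cases h1 : (i : ℕ) < w <;> by_cases h2 : (j : ℕ) < w <;>
      simp only [h1, h2, if_true, if_false] <;>
      [exact evalS_lt σ (by omega) (by omega);
       exact evalS_lt σ (by omega) (by omega);
       omega;
       exact evalS_lt σ (by omega) (by omega)]⟩⟩

lemma delAt_fst (σ : Simp C) (w : ℕ) : (delAt σ w).1 = σ.1 - 1 := rfl

lemma delAt_eval (σ : Simp C) (w : ℕ) (i : ℕ) (hi : i ≤ σ.1 - 1) :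
    evalS (delAt σ w) i = evalS σ (if i < w then i else i + 1) := by
  rw [evalS_def (delAt σ w) i hi]
  rfl

/-- insert `c` at position `w` -/
def insAt (σ : Simp C) (w : ℕ) (c : C) (hw : 0 < w) (hw2 : w ≤ σ.1)
    (h1 : c < evalS σ (w - 1)) (h2 : evalS σ w < c) : Simp C :=
  ⟨σ.1 + 1, ⟨fun i => if (i : ℕ) < w then evalS σ (i : ℕ)
      else if (i : ℕ) = w then c else evalS σ ((i : ℕ) - 1), by
    intro i j hij
    have hij' : (i : ℕ) < (j : ℕ) := hij
    have hj : (j : ℕ) < σ.1 + 2 := j.isLt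
    by_cases hi1 : (i : ℕ) < w <;> by_cases hj1 : (j : ℕ) < w <;>
      by_cases hi2 : (i : ℕ) = w <;> by_cases hj2 : (j : ℕ) = w <;>
      simp only [hi1, hj1, hi2, hj2, lt_self_iff_false, if_true, if_false] <;>
      first
        | omega
        | exact evalS_lt σ (by omega) (by omega)
        | exact lt_of_le_of_lt (evalS_le σ (by omega) (by omega)) h2
        | exact lt_of_lt_of_le h1 (evalS_le σ (by omega) (by omega))⟩⟩

lemma insAt_fst (σ : Simp C) (w : ℕ) (c : C) (hw hw2 h1 h2) :
    (insAt σ w c hw hw2 h1 h2).1 = σ.1 + 1 := rfl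

lemma insAt_eval (σ : Simp C) (w : ℕ) (c : C) (hw hw2 h1 h2) (i : ℕ) (hi : i ≤ σ.1 + 1) :
    evalS (insAt σ w c hw hw2 h1 h2) i =
      if i < w then evalS σ i else if i = w then c else evalS σ (i - 1) := by
  rw [evalS_def (insAt σ w c hw hw2 h1 h2) i hi]
  rfl


section Ctx

variable {A B : Set C}

lemma good_zero_notA (hAdown : ∀ a c : C, a ∈ A → c ≤ a → c ∈ A)
    {σ : Simp C} (hG : Good A B σ) : evalS σ 0 ∉ A := by
  intro h0
  apply hG.1
  intro i
  rw [evalS_fin]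
  exact hAdown _ _ h0 (evalS_le σ (Nat.lt_succ_iff.mp i.isLt) (Nat.zero_le _))

lemma good_zero_B (hunion : A ∪ B = Set.univ) (hAdown : ∀ a c : C, a ∈ A → c ≤ a → c ∈ A)
    {σ : Simp C} (hG : Good A B σ) : evalS σ 0 ∈ B := by
  have : evalS σ 0 ∈ A ∪ B := hunion ▸ Set.mem_univ _
  rcases this with h | h
  · exact absurd h (good_zero_notA hAdown hG)
  · exact h

lemma good_last_notB (hBup : ∀ b c : C, b ∈ B → b ≤ c → c ∈ B)
    {σ : Simp C} (hG : Good A B σ) : evalS σ σ.1 ∉ B := by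
  intro h0
  apply hG.2
  intro i
  rw [evalS_fin]
  exact hBup _ _ h0 (evalS_le σ le_rfl (Nat.lt_succ_iff.mp i.isLt))

lemma isW_eval {σ : Simp C} {w : ℕ} (h : IsW B σ w) {i : ℕ} (hi : i ≤ σ.1) :
    evalS σ i ∈ B ↔ i ≤ w := by
  have := h ⟨i, by omega⟩
  rw [evalS_def σ i hi]
  simpa using this

lemma isW_lt {σ : Simp C} {w : ℕ} (hG : Good A B σ) (h : IsW B σ w) : w < σ.1 := by
  by_contra hc
  apply hG.2
  intro i
  exact (h i).2 (by have := Nat.lt_succ_iff.mp i.isLt; omega)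

lemma isW_unique {σ : Simp C} {w w' : ℕ} (hG : Good A B σ) (h : IsW B σ w)
    (h' : IsW B σ w') : w = w' := by
  have hw := isW_lt hG h
  have hw' := isW_lt hG h'
  have m1 : evalS σ w ∈ B := (isW_eval h (by omega)).2 le_rfl
  have m2 : evalS σ w' ∈ B := (isW_eval h' (by omega)).2 le_rfl
  have l1 : w ≤ w' := (isW_eval h' (by omega)).1 m1
  have l2 : w' ≤ w := (isW_eval h (by omega)).1 m2
  omega

lemma exists_isW (hunion : A ∪ B = Set.univ) (hBup : ∀ b c : C, b ∈ B → b ≤ c → c ∈ B)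
    (hAdown : ∀ a c : C, a ∈ A → c ≤ a → c ∈ A)
    {σ : Simp C} (hG : Good A B σ) : ∃ w : ℕ, w < σ.1 ∧ IsW B σ w := by
  classical
  set P : ℕ → Prop := fun k => evalS σ k ∈ B with hP
  set w := Nat.findGreatest P σ.1 with hwdef
  have hP0 : P 0 := good_zero_B hunion hAdown hG
  have hwle : w ≤ σ.1 := Nat.findGreatest_le _
  have hPw : P w := Nat.findGreatest_spec (Nat.zero_le _) hP0
  have hgreat : ∀ k, w < k → k ≤ σ.1 → ¬P k := fun k h1 h2 => Nat.findGreatest_is_greatest h1 h2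
  have hwlt : w < σ.1 := by
    rcases eq_or_lt_of_le hwle with h | h
    · exact absurd (h ▸ hPw) (good_last_notB hBup hG)
    · exact h
  refine ⟨w, hwlt, fun j => ?_⟩
  rw [evalS_fin]
  constructor
  · intro hj
    by_contra hc
    exact hgreat (j : ℕ) (by omega) (Nat.lt_succ_iff.mp j.isLt) hj
  · intro hj
    exact hBup _ _ hPw (evalS_le σ (by omega) hj)

lemma chain_least (hlin : IsChain (· ≤ ·) (A ∩ B)) [Finite C] {S : Set C}
    (hS : S ⊆ A ∩ B) (hne : S.Nonempty) : ∃ c, IsLeast S c := by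
  obtain ⟨a, haS, hmin⟩ := Set.Finite.exists_minimalFor id S (Set.toFinite S) hne
  refine ⟨a, haS, fun b hb => ?_⟩
  rcases eq_or_ne a b with rfl | hab
  · exact le_rfl
  · rcases hlin (hS haS) (hS hb) hab with h | h
    · exact h
    · exact hmin hb h


lemma good_of_wit {σ : Simp C} {iA iB : ℕ} (hiA : iA ≤ σ.1) (hiB : iB ≤ σ.1)
    (hA : evalS σ iA ∉ A) (hB : evalS σ iB ∉ B) : Good A B σ := by
  constructor
  · intro hall; apply hA; rw [evalS_def σ iA hiA]; exact hall _
  · intro hall; apply hB; rw [evalS_def σ iB hiB]; exact hall _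

lemma del_spec (hunion : A ∪ B = Set.univ) (hBup : ∀ b c : C, b ∈ B → b ≤ c → c ∈ B)
    (hAdown : ∀ a c : C, a ∈ A → c ≤ a → c ∈ A)
    {σ : Simp C} (hG : Good A B σ) {w : ℕ}
    (hw0 : 0 < w) (hwn : w < σ.1) (hIsW : IsW B σ w) :
    Good A B (delAt σ w) ∧ IsW B (delAt σ w) (w - 1) := by
  constructor
  · refine good_of_wit (iA := 0) (iB := σ.1 - 1) (Nat.zero_le _) (delAt_fst σ w).ge ?_ ?_
    · rw [delAt_eval σ w 0 (by omega), if_pos hw0]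
      exact good_zero_notA hAdown hG
    · rw [delAt_eval σ w (σ.1 - 1) le_rfl, if_neg (by omega)]
      have he : σ.1 - 1 + 1 = σ.1 := by omega
      rw [he]
      exact good_last_notB hBup hG
  · intro j
    have hjb : (j : ℕ) ≤ σ.1 - 1 :=
      le_trans (Nat.lt_succ_iff.mp j.isLt) (le_of_eq (delAt_fst σ w))
    rw [evalS_fin, delAt_eval σ w (j : ℕ) hjb]
    by_cases hj : (j : ℕ) < w
    · rw [if_pos hj, isW_eval hIsW (by omega)]; omega
    · rw [if_neg hj, isW_eval hIsW (by omega)]; omega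

lemma del_not_type1 (hunion : A ∪ B = Set.univ) (hBup : ∀ b c : C, b ∈ B → b ≤ c → c ∈ B)
    (hAdown : ∀ a c : C, a ∈ A → c ≤ a → c ∈ A)
    {σ : Simp C} (hG : Good A B σ) {w : ℕ}
    (hw0 : 0 < w) (hwn : w < σ.1) (hIsW : IsW B σ w)
    (hwA : evalS σ w ∈ A) (hwB : evalS σ w ∈ B)
    (hleast : IsLeast {c : C | c ∈ A ∧ c ∈ B ∧ c ≤ evalS σ (w - 1) ∧ evalS σ (w + 1) ≤ c}
      (evalS σ w)) :
    ¬ Type1 A B (delAt σ w) := by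
  obtain ⟨hG', hW'⟩ := del_spec hunion hBup hAdown hG hw0 hwn hIsW
  rintro ⟨w', hw'0, hw'lt, hw'IsW, -, -, hl'⟩
  have hww : w' = w - 1 := isW_unique hG' hw'IsW hW'
  subst hww
  have hw2 : 2 ≤ w := by omega
  have hmem : evalS σ w ∈ {c : C | c ∈ A ∧ c ∈ B ∧
      c ≤ evalS (delAt σ w) (w - 1 - 1) ∧ evalS (delAt σ w) (w - 1 + 1) ≤ c} := by
    refine ⟨hwA, hwB, ?_, ?_⟩
    · rw [delAt_eval σ w (w - 1 - 1) (by omega), if_pos (by omega)]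
      exact evalS_le σ (by omega) (by omega)
    · rw [delAt_eval σ w (w - 1 + 1) (by omega), if_neg (by omega)]
      exact evalS_le σ (by omega) (by omega)
  have hle := hl'.2 hmem
  rw [delAt_eval σ w (w - 1) (by omega), if_pos (by omega)] at hle
  exact absurd hle (evalS_lt σ (show w ≤ σ.1 by omega) (show w - 1 < w by omega)).not_ge


lemma back_spec [Finite C] (hunion : A ∪ B = Set.univ)
    (hBup : ∀ b c : C, b ∈ B → b ≤ c → c ∈ B)
    (hAdown : ∀ a c : C, a ∈ A → c ≤ a → c ∈ A)
    (hinterp : ∀ a ∈ A, ∀ b ∈ B, a ≤ b → ∃ c ∈ A ∩ B, a ≤ c ∧ c ≤ b)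
    (hlin : IsChain (· ≤ ·) (A ∩ B))
    {τ : Simp C} (hG : Good A B τ) (hT2 : ¬ Type1 A B τ) :
    ∃ (σ' : Simp C) (v : ℕ), Good A B σ' ∧ Type1 A B σ' ∧ IsW B σ' v ∧ delAt σ' v = τ := by
  obtain ⟨v, hvlt, hv⟩ := exists_isW hunion hBup hAdown hG
  have hnB : evalS τ (v + 1) ∉ B := by rw [isW_eval hv (by omega)]; omega
  have haA : evalS τ (v + 1) ∈ A := by
    have : evalS τ (v + 1) ∈ A ∪ B := hunion ▸ Set.mem_univ _
    rcases this with h | h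
    · exact h
    · exact absurd h hnB
  have hbB : evalS τ v ∈ B := (isW_eval hv (by omega)).2 le_rfl
  have hSne : Set.Nonempty {c : C | c ∈ A ∧ c ∈ B ∧ c ≤ evalS τ v ∧ evalS τ (v + 1) ≤ c} := by
    obtain ⟨c, ⟨hcA, hcB⟩, hc1, hc2⟩ :=
      hinterp _ haA _ hbB (evalS_le τ (by omega) (by omega))
    exact ⟨c, hcA, hcB, hc2, hc1⟩
  obtain ⟨c, hcS, hcLB⟩ := chain_least hlin (fun c hc => ⟨hc.1, hc.2.1⟩) hSne
  obtain ⟨hcA, hcB, hcle, hcge⟩ := hcS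
  have hlt1 : evalS τ (v + 1) < c := lt_of_le_of_ne hcge (by
    intro h; rw [← h] at hcB; exact hnB hcB)
  have hlt2 : c < evalS τ v := lt_of_le_of_ne hcle (by
    intro h
    rcases Nat.eq_zero_or_pos v with rfl | hv0
    · exact good_zero_notA hAdown hG (h ▸ hcA)
    · apply hT2
      refine ⟨v, hv0, hvlt, hv, h ▸ hcA, hbB, ⟨⟨h ▸ hcA, hbB,
        evalS_le τ (by omega) (by omega), evalS_le τ (by omega) (by omega)⟩, ?_⟩⟩
      rintro c' ⟨hA', hB', hle', hge'⟩
      rcases eq_or_ne c' (evalS τ v) with h' | h'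
      · exact h'.ge
      · rcases hlin ⟨hA', hB'⟩ ⟨h ▸ hcA, hbB⟩ h' with h'' | h''
        · exact h ▸ hcLB ⟨hA', hB', h'', hge'⟩
        · exact h'')
  set σ' := insAt τ (v + 1) c (by omega) (by omega) hlt2 hlt1 with hσ'def
  have hfst : σ'.1 = τ.1 + 1 := rfl
  have hev : ∀ i : ℕ, i ≤ τ.1 + 1 → evalS σ' i =
      if i < v + 1 then evalS τ i else if i = v + 1 then c else evalS τ (i - 1) :=
    fun i hi => insAt_eval τ (v + 1) c _ _ _ _ i hi
  have hG' : Good A B σ' := by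
    refine good_of_wit (iA := 0) (iB := τ.1 + 1) (Nat.zero_le _) (le_of_eq hfst.symm) ?_ ?_
    · rw [hev 0 (by omega), if_pos (by omega)]
      exact good_zero_notA hAdown hG
    · rw [hev (τ.1 + 1) le_rfl, if_neg (by omega), if_neg (by omega)]
      simp only [Nat.add_sub_cancel]
      exact good_last_notB hBup hG
  have hW' : IsW B σ' (v + 1) := by
    intro j
    have hjb : (j : ℕ) ≤ τ.1 + 1 := le_trans (Nat.lt_succ_iff.mp j.isLt) (le_of_eq hfst)
    rw [evalS_fin, hev _ hjb]
    by_cases h1 : (j : ℕ) < v + 1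
    · rw [if_pos h1, isW_eval hv (by omega)]; omega
    · by_cases h2 : (j : ℕ) = v + 1
      · rw [if_neg h1, if_pos h2]; exact iff_of_true hcB (by omega)
      · rw [if_neg h1, if_neg h2, isW_eval hv (by omega)]; omega
  have hT1 : Type1 A B σ' := by
    refine ⟨v + 1, by omega, ?_, hW', ?_, ?_, ?_⟩
    · rw [hfst]; omega
    · rw [hev (v + 1) (by omega), if_neg (by omega), if_pos rfl]; exact hcA
    · rw [hev (v + 1) (by omega), if_neg (by omega), if_pos rfl]; exact hcB
    · simp only [Nat.add_sub_cancel]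
      rw [hev (v + 1) (by omega), if_neg (by omega), if_pos rfl]
      rw [show evalS σ' v = evalS τ v from by rw [hev v (by omega), if_pos (by omega)]]
      rw [show evalS σ' (v + 1 + 1) = evalS τ (v + 1) from by
        rw [hev (v + 1 + 1) (by omega), if_neg (by omega), if_neg (by omega)]
        simp only [Nat.add_sub_cancel]]
      exact ⟨⟨hcA, hcB, hcle, hcge⟩, hcLB⟩
  have hdel : delAt σ' (v + 1) = τ := by
    refine Simp.ext ?_ ?_
    · rw [delAt_fst, hfst]; omega
    · intro i hi
      rw [delAt_fst, hfst] at hi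
      have hi' : i ≤ τ.1 := by omega
      rw [delAt_eval σ' (v + 1) i (by rw [hfst]; omega)]
      by_cases h1 : i < v + 1
      · rw [if_pos h1, hev i (by omega), if_pos h1]
      · rw [if_neg h1, hev (i + 1) (by omega), if_neg (by omega), if_neg (by omega)]
        simp only [Nat.add_sub_cancel]
  exact ⟨σ', v + 1, hG', hT1, hW', hdel⟩


lemma del_inj (hunion : A ∪ B = Set.univ)
    (hBup : ∀ b c : C, b ∈ B → b ≤ c → c ∈ B)
    (hAdown : ∀ a c : C, a ∈ A → c ≤ a → c ∈ A)
    {σ1 σ2 : Simp C} (hG1 : Good A B σ1) (hT1 : Type1 A B σ1)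
    (hG2 : Good A B σ2) (hT2 : Type1 A B σ2)
    {w1 w2 : ℕ} (h1 : IsW B σ1 w1) (h2 : IsW B σ2 w2)
    (heq : delAt σ1 w1 = delAt σ2 w2) : σ1 = σ2 := by
  obtain ⟨w1', hw10, hw1lt, hW1, hA1, hB1, hl1⟩ := hT1
  obtain ⟨w2', hw20, hw2lt, hW2, hA2, hB2, hl2⟩ := hT2
  have e1 : w1' = w1 := isW_unique hG1 hW1 h1
  have e2 : w2' = w2 := isW_unique hG2 hW2 h2
  rw [e1] at hw10 hw1lt hW1 hA1 hB1 hl1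
  rw [e2] at hw20 hw2lt hW2 hA2 hB2 hl2
  obtain ⟨hGτ, hWτ1⟩ := del_spec hunion hBup hAdown hG1 hw10 hw1lt h1
  obtain ⟨-, hWτ2⟩ := del_spec hunion hBup hAdown hG2 hw20 hw2lt h2
  rw [← heq] at hWτ2
  have hw12 : w1 = w2 := by
    have := isW_unique hGτ hWτ1 hWτ2; omega
  subst hw12
  have hfst1 : σ1.1 - 1 = σ2.1 - 1 := by
    rw [← delAt_fst σ1 w1, heq, delAt_fst]
  have hn : σ1.1 = σ2.1 := by omega
  have key : ∀ (σ : Simp C) (w : ℕ), w < σ.1 → ∀ i ≤ σ.1, i ≠ w →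
      evalS σ i = evalS (delAt σ w) (if i < w then i else i - 1) := by
    intro σ w hw i hi hne
    by_cases h : i < w
    · rw [if_pos h, delAt_eval σ w i (by omega), if_pos h]
    · rw [if_neg h, delAt_eval σ w (i - 1) (by omega), if_neg (by omega)]
      congr 1; omega
  refine Simp.ext hn ?_
  intro i hi
  rcases eq_or_ne i w1 with rfl | hne
  · -- both are least of the same set
    have a1 : evalS σ1 (i - 1) = evalS (delAt σ1 i) (i - 1) := by
      rw [delAt_eval σ1 i (i - 1) (by omega), if_pos (by omega)]
    have a2 : evalS σ1 (i + 1) = evalS (delAt σ1 i) i := by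
      rw [delAt_eval σ1 i i (by omega), if_neg (by omega)]
    have b1 : evalS σ2 (i - 1) = evalS (delAt σ1 i) (i - 1) := by
      rw [heq, delAt_eval σ2 i (i - 1) (by omega), if_pos (by omega)]
    have b2 : evalS σ2 (i + 1) = evalS (delAt σ1 i) i := by
      rw [heq, delAt_eval σ2 i i (by omega), if_neg (by omega)]
    rw [a1, a2] at hl1
    rw [b1, b2] at hl2
    exact hl1.unique hl2
  · rw [key σ1 w1 hw1lt i hi hne, key σ2 w1 hw2lt i (by omega) hne, heq]

end Ctx


/-- under the stated hypotheses on the decomposition `C = A ∪ B`,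
deleting the cut vertex `x_{w(σ)}` gives a bijection from the type-1 simplices
onto the type-2 simplices (nondegenerate simplices of the nerve of `C` lying
neither in the nerve of `A` nor in that of `B` which are not of type 1). -/
theorem type1_equiv_type2
    [Finite C] (A B : Set C)
    (hunion : A ∪ B = Set.univ)
    (hBup : ∀ b c : C, b ∈ B → b ≤ c → c ∈ B)
    (hAdown : ∀ a c : C, a ∈ A → c ≤ a → c ∈ A)
    (hinterp : ∀ a ∈ A, ∀ b ∈ B, a ≤ b → ∃ c ∈ A ∩ B, a ≤ c ∧ c ≤ b)
    (hlin : IsChain (· ≤ ·) (A ∩ B)) :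
    ∃ F : {σ : Simp C // Good A B σ ∧ Type1 A B σ} ≃
        {σ : Simp C // Good A B σ ∧ ¬Type1 A B σ},
      ∀ (σ : {σ : Simp C // Good A B σ ∧ Type1 A B σ}) (w : ℕ),
        0 < w → w < σ.1.1 → IsW B σ.1 w →
        (F σ).1.1 = σ.1.1 - 1 ∧
        ∀ i : ℕ, i < σ.1.1 →
          evalS (F σ).1 i = evalS σ.1 (if i < w then i else i + 1) := by
  classical
  let f : {σ : Simp C // Good A B σ ∧ Type1 A B σ} →
      {σ : Simp C // Good A B σ ∧ ¬Type1 A B σ} := fun p =>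
    ⟨delAt p.1 p.2.2.choose, by
      obtain ⟨hw0, hwlt, hW, hA, hB, hl⟩ := p.2.2.choose_spec
      exact ⟨(del_spec hunion hBup hAdown p.2.1 hw0 hwlt hW).1,
        del_not_type1 hunion hBup hAdown p.2.1 hw0 hwlt hW hA hB hl⟩⟩
  have hinj : Function.Injective f := by
    intro p q hpq
    have hpq' : delAt p.1 p.2.2.choose = delAt q.1 q.2.2.choose := congrArg Subtype.val hpq
    obtain ⟨hw0p, hwltp, hWp, -, -, -⟩ := p.2.2.choose_spec
    obtain ⟨hw0q, hwltq, hWq, -, -, -⟩ := q.2.2.choose_spec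
    exact Subtype.ext (del_inj hunion hBup hAdown p.2.1 p.2.2 q.2.1 q.2.2 hWp hWq hpq')
  have hsurj : Function.Surjective f := by
    intro q
    obtain ⟨σ', v, hG', hT1', hW', hdel⟩ :=
      back_spec hunion hBup hAdown hinterp hlin q.2.1 q.2.2
    refine ⟨⟨σ', hG', hT1'⟩, ?_⟩
    apply Subtype.ext
    show delAt σ' hT1'.choose = q.1
    have hWc : IsW B σ' hT1'.choose := hT1'.choose_spec.2.2.1
    rw [show hT1'.choose = v from isW_unique hG' hWc hW']
    exact hdel
  refine ⟨Equiv.ofBijective f ⟨hinj, hsurj⟩, ?_⟩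
  intro σ w hw0 hwlt hW
  have happ : (Equiv.ofBijective f ⟨hinj, hsurj⟩) σ = f σ := rfl
  rw [happ]
  obtain ⟨hw0', hwlt', hW', -, -, -⟩ := σ.2.2.choose_spec
  have hwe : σ.2.2.choose = w := isW_unique σ.2.1 hW' hW
  constructor
  · show (delAt σ.1 σ.2.2.choose).1 = σ.1.1 - 1
    rw [delAt_fst]
  · intro i hi
    show evalS (delAt σ.1 σ.2.2.choose) i = _
    rw [hwe, delAt_eval σ.1 w i (by omega)]



end Stmt17
end
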